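/- arXiv:2603.27149 — 4 statements merged into one kernel-verified Lean document; each statement's English description precedes it below -/
import Mathlib

section
/- Let ≺ be a monomial order on R^d, let U ⊆ R^d be a submodule with Gröbner basis G, and let H = {h_1,…,h_r} ⊆ R^d∖{0} be a finite set with NF(h_i, U) = h_i for all i. Then for every f ∈ R^d there exist an element p ∈ R^d and polynomials q_1,…,q_r ∈ R such that f − p − Σ_{i=1}^r q_i h_i ∈ U, no module monomial in the support of p is divisible by a leading monomial of an element of G or of H, and lm(q_i h_i) ⪯ lm(f) for every i with q_i ≠ 0. -/
attribute [local instance] Classical.propDecidable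

noncomputable section

/-- Module monomial index: an exponent vector together with a component index. -/
abbrev ModMon (n d : ℕ) := (Fin n →₀ ℕ) × Fin d

/-- The free module `R^d` over `R = k[X_1, …, X_n]`. -/
abbrev FreeMod (k : Type*) [Field k] (n d : ℕ) := Fin d → MvPolynomial (Fin n) k

variable {k : Type*} [Field k] {n d : ℕ}

/-- The module monomial `X^α e_i` as an element of `R^d`. -/
def mmVec (m : ModMon n d) : FreeMod k n d :=
  Pi.single m.2 (MvPolynomial.monomial m.1 (1 : k))

/-- The support of `f ∈ R^d` as a finite set of module monomials. -/
def suppF (f : FreeMod k n d) : Finset (ModMon n d) :=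
  (Finset.univ : Finset (Fin d)).biUnion fun i =>
    ((f i).support.image fun a => ((a, i) : ModMon n d))

/-- A monomial order on `R^d`: a well-founded total order on module monomials such that
`e_i ⪯ X^α e_i` and which is compatible with multiplication by monomials. -/
structure ModMonOrder (n d : ℕ) where
  toOrd : LinearOrder (ModMon n d)
  wf : WellFounded toOrd.lt
  base_le : ∀ (i : Fin d) (a : Fin n →₀ ℕ), toOrd.le (0, i) (a, i)
  add_le : ∀ (a b c : Fin n →₀ ℕ) (i j : Fin d),
    toOrd.le (b, i) (c, j) → toOrd.le (a + b, i) (a + c, j)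

namespace ModMonOrder

variable (ord : ModMonOrder n d)

/-- The leading monomial of `f` (`⊥` if `f = 0`). -/
def lmo (f : FreeMod k n d) : WithBot (ModMon n d) :=
  letI := ord.toOrd
  (suppF f).max

/-- The order on leading monomials, extended to `WithBot` (with `⊥` smallest). -/
def leB (x y : WithBot (ModMon n d)) : Prop :=
  WithBot.recBotCoe True
    (fun a => WithBot.recBotCoe False (fun b => ord.toOrd.le a b) y) x

/-- The leading coefficient of `f` (`0` if `f = 0`). -/
def lc (f : FreeMod k n d) : k :=
  WithBot.recBotCoe 0 (fun m => (f m.2).coeff m.1) (ord.lmo f)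

/-- The leading monomial of `f`, as an element of `R^d` (`0` if `f = 0`). -/
def lmVec (f : FreeMod k n d) : FreeMod k n d :=
  WithBot.recBotCoe 0 (fun m => mmVec m) (ord.lmo f)

/-- `lm(W)`: the submodule generated by the leading monomials of nonzero elements of `W`. -/
def lmSub (W : Submodule (MvPolynomial (Fin n) k) (FreeMod k n d)) :
    Submodule (MvPolynomial (Fin n) k) (FreeMod k n d) :=
  Submodule.span (MvPolynomial (Fin n) k) {v | ∃ f ∈ W, f ≠ 0 ∧ v = ord.lmVec f}

end ModMonOrder

/-- Divisibility in `R^d`: `u` divides `v` iff `v = p • u` for some polynomial `p`. -/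
def dvdV (u v : FreeMod k n d) : Prop := ∃ p : MvPolynomial (Fin n) k, v = p • u

/-- `G` is a Gröbner basis of the submodule `W ⊆ R^d`. -/
def IsGB (ord : ModMonOrder n d) (W : Submodule (MvPolynomial (Fin n) k) (FreeMod k n d))
    (G : Finset (FreeMod k n d)) : Prop :=
  Submodule.span (MvPolynomial (Fin n) k) (G : Set (FreeMod k n d)) = W ∧
  Submodule.span (MvPolynomial (Fin n) k) (ord.lmVec '' (G : Set (FreeMod k n d))) = ord.lmSub W

/-- `G` is the reduced Gröbner basis of `W ⊆ R^d`. -/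
def IsRedGB (ord : ModMonOrder n d) (W : Submodule (MvPolynomial (Fin n) k) (FreeMod k n d))
    (G : Finset (FreeMod k n d)) : Prop :=
  IsGB ord W G ∧
  (∀ g ∈ G, ∀ g' ∈ G, g ≠ g' → ¬ dvdV (ord.lmVec g) (ord.lmVec g')) ∧
  ∀ g ∈ G, ord.lc g = 1 ∧ ∀ m ∈ suppF (g - ord.lmVec g), mmVec m ∉ ord.lmSub W

/-- `p` is a normal form of `f` modulo `U`: `f - p ∈ U` and `p` is supported on
module monomials outside `lm(U)`. -/
def IsNF (ord : ModMonOrder n d) (U : Submodule (MvPolynomial (Fin n) k) (FreeMod k n d))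
    (f p : FreeMod k n d) : Prop :=
  f - p ∈ U ∧ ∀ m ∈ suppF p, mmVec m ∉ ord.lmSub U

/-- `H` is a Gröbner basis of `V` relative to `U`. -/
def IsRelGB (ord : ModMonOrder n d) (U V : Submodule (MvPolynomial (Fin n) k) (FreeMod k n d))
    (H : Finset (FreeMod k n d)) : Prop :=
  (H : Set (FreeMod k n d)) ⊆ (V : Set (FreeMod k n d)) \ (U : Set (FreeMod k n d)) ∧
  (∀ h ∈ H, ∀ m ∈ suppF h, mmVec m ∉ ord.lmSub U) ∧
  Submodule.span (MvPolynomial (Fin n) k) (ord.lmVec '' (H : Set (FreeMod k n d))) ⊔ ord.lmSub U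
    = ord.lmSub V

/-- `H` is a minimal Gröbner basis of `V` relative to `U`. -/
def IsMinRelGB (ord : ModMonOrder n d) (U V : Submodule (MvPolynomial (Fin n) k) (FreeMod k n d))
    (H : Finset (FreeMod k n d)) : Prop :=
  IsRelGB ord U V H ∧
  ∀ h ∈ H, ∀ h' ∈ H, h ≠ h' → ¬ dvdV (ord.lmVec h) (ord.lmVec h')

/-- `H` is the reduced Gröbner basis of `V` relative to `U`. -/
def IsRedRelGB (ord : ModMonOrder n d) (U V : Submodule (MvPolynomial (Fin n) k) (FreeMod k n d))
    (H : Finset (FreeMod k n d)) : Prop :=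
  IsMinRelGB ord U V H ∧
  ∀ h ∈ H, ord.lc h = 1 ∧ ∀ m ∈ suppF (h - ord.lmVec h), mmVec m ∉ ord.lmSub V

end

noncomputable section AuxLem
variable {k : Type*} [Field k] {n d : ℕ}
namespace RelDiv

open MvPolynomial

theorem mem_suppF {f : FreeMod k n d} {m : ModMon n d} :
    m ∈ suppF f ↔ (f m.2).coeff m.1 ≠ 0 := by
  obtain ⟨a, i⟩ := m
  simp only [suppF, Finset.mem_biUnion, Finset.mem_univ, true_and, Finset.mem_image,
    MvPolynomial.mem_support_iff, Prod.mk.injEq]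
  constructor
  · rintro ⟨j, a', h, rfl, rfl⟩; exact h
  · intro h; exact ⟨i, a, h, rfl, rfl⟩

theorem suppF_zero : suppF (0 : FreeMod k n d) = ∅ := by
  ext m; simp [mem_suppF]

theorem suppF_eq_empty {f : FreeMod k n d} : suppF f = ∅ ↔ f = 0 := by
  constructor
  · intro h
    funext i
    ext a
    have : ((a, i) : ModMon n d) ∉ suppF f := by simp [h]
    simpa [mem_suppF] using this
  · rintro rfl; exact suppF_zero

theorem suppF_mmVec (m : ModMon n d) : suppF (mmVec m : FreeMod k n d) = {m} := by
  ext x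
  simp only [mem_suppF, Finset.mem_singleton, mmVec]
  rcases eq_or_ne x.2 m.2 with h2 | h2
  · rw [h2, Pi.single_eq_same, MvPolynomial.coeff_monomial]
    constructor
    · intro h
      split_ifs at h with h1
      · exact (Prod.ext h1.symm h2).symm ▸ rfl
      · exact absurd rfl h
    · rintro rfl; simp
  · rw [Pi.single_eq_of_ne h2]
    simp only [MvPolynomial.coeff_zero, ne_eq, not_true_eq_false, false_iff]
    intro hx; exact h2 (by rw [hx])

theorem mmVec_ne_zero (m : ModMon n d) : (mmVec m : FreeMod k n d) ≠ 0 := by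
  intro h
  have := suppF_mmVec (k := k) m
  rw [h, suppF_zero] at this
  exact Finset.singleton_ne_empty m this.symm

theorem suppF_add_subset (f g : FreeMod k n d) : suppF (f + g) ⊆ suppF f ∪ suppF g := by
  intro m hm
  rw [mem_suppF] at hm
  simp only [Pi.add_apply, MvPolynomial.coeff_add] at hm
  rw [Finset.mem_union, mem_suppF, mem_suppF]
  by_contra h
  push_neg at h
  rw [h.1, h.2, add_zero] at hm
  exact hm rfl

theorem suppF_sub_subset (f g : FreeMod k n d) : suppF (f - g) ⊆ suppF f ∪ suppF g := by
  intro m hm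
  rw [mem_suppF] at hm
  simp only [Pi.sub_apply, MvPolynomial.coeff_sub] at hm
  rw [Finset.mem_union, mem_suppF, mem_suppF]
  by_contra h
  push_neg at h
  rw [h.1, h.2, sub_zero] at hm
  exact hm rfl

theorem suppF_smul_subset {p : MvPolynomial (Fin n) k} {f : FreeMod k n d} {m : ModMon n d}
    (hm : m ∈ suppF (p • f)) : ∃ γ, ∃ m' ∈ suppF f, m = (γ + m'.1, m'.2) := by
  rw [mem_suppF] at hm
  have : m.1 ∈ (p * f m.2).support := by
    rw [MvPolynomial.mem_support_iff]; exact hm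
  have := MvPolynomial.support_mul p (f m.2) this
  rw [Finset.mem_add] at this
  obtain ⟨a, ha, b, hb, hab⟩ := this
  refine ⟨a, (b, m.2), ?_, ?_⟩
  · rw [mem_suppF]; exact MvPolynomial.mem_support_iff.mp hb
  · exact Prod.ext hab.symm rfl

theorem suppF_monomial_smul_subset {β : Fin n →₀ ℕ} {c : k} {f : FreeMod k n d} :
    suppF ((MvPolynomial.monomial β c : MvPolynomial (Fin n) k) • f) ⊆
      (suppF f).image fun m => ((β + m.1, m.2) : ModMon n d) := by
  intro m hm
  rw [mem_suppF] at hm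
  simp only [Pi.smul_apply, smul_eq_mul, MvPolynomial.coeff_monomial_mul'] at hm
  split_ifs at hm with hle
  · rw [Finset.mem_image]
    refine ⟨(m.1 - β, m.2), ?_, ?_⟩
    · rw [mem_suppF]
      intro h
      rw [h, mul_zero] at hm
      exact hm rfl
    · exact Prod.ext (add_tsub_cancel_of_le hle) rfl
  · exact absurd rfl hm

theorem coeff_monomial_smul (β : Fin n →₀ ℕ) (c : k) (f : FreeMod k n d) (a : Fin n →₀ ℕ)
    (i : Fin d) :
    (((MvPolynomial.monomial β c : MvPolynomial (Fin n) k) • f) i).coeff (β + a)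
      = c * (f i).coeff a := by
  simp [MvPolynomial.coeff_monomial_mul]

end RelDiv
end AuxLem
section OrdLem
namespace RelDiv

open MvPolynomial

theorem wb_le_of {α : Type*} [LinearOrder α] {x y : WithBot α}
    (h : x = ⊥ ∨ ∃ a b : α, x = ↑a ∧ y = ↑b ∧ a ≤ b) : x ≤ y := by
  rcases h with rfl | ⟨a, b, rfl, rfl, hab⟩
  · exact bot_le
  · exact WithBot.coe_le_coe.mpr hab

theorem wb_coe_le {α : Type*} [LinearOrder α] {a b : α} (h : (↑a : WithBot α) ≤ ↑b) : a ≤ b :=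
  WithBot.coe_le_coe.mp h

theorem wb_max_eq {α : Type*} [LinearOrder α] {s : Finset α} {m : α}
    (hmem : m ∈ s) (hle : ∀ x ∈ s, x ≤ m) : s.max = ↑m :=
  le_antisymm (Finset.max_le fun a ha => WithBot.coe_le_coe.mpr (hle a ha)) (Finset.le_max hmem)

theorem wb_wf {α : Type*} [LinearOrder α] (h : WellFounded ((· < ·) : α → α → Prop)) :
    WellFounded ((· < ·) : WithBot α → WithBot α → Prop) := by
  haveI : WellFoundedLT α := ⟨h⟩
  exact wellFounded_lt

theorem wb_lt_of_le_ne {α : Type*} [LinearOrder α] {x y : WithBot α} (h1 : x ≤ y) (h2 : x ≠ y) :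
    x < y := lt_of_le_of_ne h1 h2

variable {k : Type*} [Field k] {n d : ℕ} (ord : ModMonOrder n d)

theorem leB_trans {x y z : WithBot (ModMon n d)} (h1 : ord.leB x y) (h2 : ord.leB y z) :
    ord.leB x z := by
  cases x with
  | bot => trivial
  | coe a =>
    cases y with
    | bot => exact h1.elim
    | coe b =>
      cases z with
      | bot => exact h2.elim
      | coe c => exact ord.toOrd.le_trans a b c h1 h2

theorem lmo_eq_bot {f : FreeMod k n d} : ord.lmo f = ⊥ ↔ f = 0 := by
  letI := ord.toOrd
  rw [show ord.lmo f = (suppF f).max from rfl, Finset.max_eq_bot, suppF_eq_empty]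

theorem lmo_exists {f : FreeMod k n d} (hf : f ≠ 0) :
    ∃ m : ModMon n d, ord.lmo f = ↑m := by
  cases h : ord.lmo f with
  | bot => exact absurd ((lmo_eq_bot ord).mp h) hf
  | coe m => exact ⟨m, rfl⟩

theorem lmo_mem {f : FreeMod k n d} {m : ModMon n d} (h : ord.lmo f = ↑m) : m ∈ suppF f := by
  letI := ord.toOrd
  exact Finset.mem_of_max h

theorem le_lmo {f : FreeMod k n d} {m : ModMon n d} (hm : m ∈ suppF f) :
    ord.leB ↑m (ord.lmo f) := by
  letI := ord.toOrd
  cases hmax : ord.lmo f with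
  | bot =>
    have hf0 := (lmo_eq_bot ord).mp hmax
    rw [hf0, suppF_zero] at hm
    exact absurd hm (Finset.notMem_empty m)
  | coe b =>
    have h := Finset.le_max hm
    rw [show (suppF f).max = ord.lmo f from rfl, hmax] at h
    exact wb_coe_le h

theorem lmo_le {f : FreeMod k n d} {b : WithBot (ModMon n d)}
    (hb : ∀ x ∈ suppF f, ord.leB ↑x b) : ord.leB (ord.lmo f) b := by
  cases hmax : ord.lmo f with
  | bot => trivial
  | coe a => exact hb a (lmo_mem ord hmax)

theorem lmo_lt {f : FreeMod k n d} {m : ModMon n d}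
    (hb : ∀ x ∈ suppF f, ord.leB ↑x ↑m ∧ x ≠ m) :
    ord.leB (ord.lmo f) ↑m ∧ ord.lmo f ≠ ↑m := by
  constructor
  · exact lmo_le ord fun x hx => (hb x hx).1
  · intro h; exact (hb m (lmo_mem ord h)).2 rfl

theorem lc_eq {f : FreeMod k n d} {m : ModMon n d} (hm : ord.lmo f = ↑m) :
    ord.lc f = (f m.2).coeff m.1 := by
  rw [ModMonOrder.lc, hm]
  rfl

theorem lc_ne_zero {f : FreeMod k n d} (hf : f ≠ 0) : ord.lc f ≠ 0 := by
  obtain ⟨m, hm⟩ := lmo_exists ord hf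
  rw [lc_eq ord hm]
  exact mem_suppF.mp (lmo_mem ord hm)

theorem lmVec_eq {f : FreeMod k n d} {m : ModMon n d} (h : ord.lmo f = ↑m) :
    ord.lmVec f = mmVec m := by
  rw [ModMonOrder.lmVec, h]
  rfl

theorem lmVec_eq_zero {f : FreeMod k n d} (h : f = 0) : ord.lmVec f = 0 := by
  rw [ModMonOrder.lmVec, (lmo_eq_bot ord).mpr h]
  rfl

theorem lmo_monomial_smul {β : Fin n →₀ ℕ} {c : k} {f : FreeMod k n d} {m : ModMon n d}
    (hc : c ≠ 0) (hm : ord.lmo f = ↑m) :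
    ord.lmo ((monomial β c : MvPolynomial (Fin n) k) • f) = ↑((β + m.1, m.2) : ModMon n d) := by
  letI := ord.toOrd
  show (suppF ((monomial β c : MvPolynomial (Fin n) k) • f)).max = _
  apply wb_max_eq
  · rw [mem_suppF]
    show (((monomial β c : MvPolynomial (Fin n) k) • f) m.2).coeff (β + m.1) ≠ 0
    rw [coeff_monomial_smul]
    exact mul_ne_zero hc (mem_suppF.mp (lmo_mem ord hm))
  · intro a ha
    obtain ⟨m', hm', rfl⟩ := Finset.mem_image.mp (suppF_monomial_smul_subset ha)
    have h1 : ord.leB ↑m' ↑m := by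
      have := le_lmo ord hm'
      rwa [hm] at this
    exact ord.add_le β m'.1 m.1 m'.2 m.2 h1

theorem lc_monomial_smul {β : Fin n →₀ ℕ} {c : k} {f : FreeMod k n d} {m : ModMon n d}
    (hc : c ≠ 0) (hm : ord.lmo f = ↑m) :
    ord.lc ((monomial β c : MvPolynomial (Fin n) k) • f) = c * ord.lc f := by
  rw [lc_eq ord (lmo_monomial_smul ord hc hm), lc_eq ord hm]
  exact coeff_monomial_smul β c f m.1 m.2

theorem reduce {f u : FreeMod k n d} {m mu : ModMon n d} {β : Fin n →₀ ℕ}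
    (hf : ord.lmo f = ↑m) (hu : ord.lmo u = ↑mu) (hmm : m = (β + mu.1, mu.2)) :
    ord.leB (ord.lmo (f - (monomial β (ord.lc f / ord.lc u) : MvPolynomial (Fin n) k) • u)) ↑m ∧
    ord.lmo (f - (monomial β (ord.lc f / ord.lc u) : MvPolynomial (Fin n) k) • u) ≠ ↑m := by
  have hu0 : u ≠ 0 := by
    intro h
    rw [(lmo_eq_bot ord).mpr h] at hu
    exact WithBot.bot_ne_coe hu
  have hf0 : f ≠ 0 := by
    intro h
    rw [(lmo_eq_bot ord).mpr h] at hf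
    exact WithBot.bot_ne_coe hf
  have hlcu := lc_ne_zero ord hu0
  have hlcf := lc_ne_zero ord hf0
  have hc0 : ord.lc f / ord.lc u ≠ 0 := div_ne_zero hlcf hlcu
  set w := (monomial β (ord.lc f / ord.lc u) : MvPolynomial (Fin n) k) • u with hwdef
  have hlw : ord.lmo w = ↑m := by
    rw [hmm]; exact lmo_monomial_smul ord hc0 hu
  have hlcw : ord.lc w = ord.lc f := by
    rw [hwdef, lc_monomial_smul ord hc0 hu, div_mul_cancel₀ _ hlcu]
  apply lmo_lt
  intro x hx
  constructor
  · rcases Finset.mem_union.mp (suppF_sub_subset f w hx) with h | h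
    · have := le_lmo ord h; rwa [hf] at this
    · have := le_lmo ord h; rwa [hlw] at this
  · rintro rfl
    have h1 : (f x.2).coeff x.1 = ord.lc f := (lc_eq ord hf).symm
    have h2 : (w x.2).coeff x.1 = ord.lc f := by rw [← lc_eq ord hlw, hlcw]
    have hx' := mem_suppF.mp hx
    simp only [Pi.sub_apply, MvPolynomial.coeff_sub, h1, h2, sub_self] at hx'
    exact hx' rfl

theorem mem_lmSub_elim {U : Submodule (MvPolynomial (Fin n) k) (FreeMod k n d)}
    {v : FreeMod k n d} (hv : v ∈ ord.lmSub U) :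
    ∀ m ∈ suppF v, ∃ u, u ∈ U ∧ u ≠ 0 ∧ ∃ (mu : ModMon n d) (β : Fin n →₀ ℕ),
      ord.lmo u = ↑mu ∧ m = (β + mu.1, mu.2) := by
  refine Submodule.span_induction ?_ ?_ ?_ ?_ hv
  · rintro x ⟨u, hu, hu0, rfl⟩ m hm
    obtain ⟨mu, hmu⟩ := lmo_exists ord hu0
    rw [lmVec_eq ord hmu, suppF_mmVec, Finset.mem_singleton] at hm
    exact ⟨u, hu, hu0, mu, 0, hmu, by rw [hm]; exact Prod.ext (zero_add _).symm rfl⟩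
  · intro m hm; rw [suppF_zero] at hm; exact absurd hm (Finset.notMem_empty m)
  · intro x y hx hy ihx ihy m hm
    rcases Finset.mem_union.mp (suppF_add_subset x y hm) with h | h
    exacts [ihx m h, ihy m h]
  · intro a x hx ih m hm
    obtain ⟨γ, m', hm', rfl⟩ := suppF_smul_subset hm
    obtain ⟨u, hu, hu0, mu, β, hmu, hm'eq⟩ := ih m' hm'
    refine ⟨u, hu, hu0, mu, γ + β, hmu, ?_⟩
    rw [hm'eq]
    exact Prod.ext (add_assoc γ β mu.1).symm rfl

theorem dvd_mmVec {m m' : ModMon n d} (hd : dvdV (mmVec m' : FreeMod k n d) (mmVec m)) :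
    ∃ β : Fin n →₀ ℕ, m = (β + m'.1, m'.2) := by
  obtain ⟨a, i⟩ := m
  obtain ⟨a', i'⟩ := m'
  obtain ⟨p, hp⟩ := hd
  have h2 : i = i' := by
    by_contra hne
    have hc := congrFun hp i
    simp only [mmVec, Pi.single_eq_same, Pi.smul_apply, smul_eq_mul,
      Pi.single_eq_of_ne hne] at hc
    rw [mul_zero, MvPolynomial.monomial_eq_zero] at hc
    exact one_ne_zero hc
  subst h2
  have hc := congrFun hp i
  simp only [mmVec, Pi.single_eq_same, Pi.smul_apply, smul_eq_mul] at hc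
  have hmem : a ∈ (p * monomial a' (1 : k)).support := by
    rw [← hc, MvPolynomial.mem_support_iff, MvPolynomial.coeff_monomial, if_pos rfl]
    exact one_ne_zero
  have hmem2 := MvPolynomial.support_mul p (monomial a' (1 : k)) hmem
  rw [Finset.mem_add] at hmem2
  obtain ⟨γ, hγ, b, hb, hab⟩ := hmem2
  rw [MvPolynomial.support_monomial, if_neg one_ne_zero, Finset.mem_singleton] at hb
  subst hb
  exact ⟨γ, Prod.ext hab.symm rfl⟩

end RelDiv
end OrdLem
/-- **Relative division algorithm** (output specification). Given a monomial order on `R^d`, a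
submodule `U` with Gröbner basis `G`, and a finite set `H = {h_1, …, h_r} ⊆ R^d ∖ {0}` of
elements in normal form with respect to `U`, every `f ∈ R^d` admits a remainder `p` and
quotients `q_1, …, q_r` such that `f - p - ∑ q_i h_i ∈ U`, no module monomial in the support
of `p` is divisible by a leading monomial of an element of `G` or of `H`, and
`lm(q_i h_i) ⪯ lm(f)` whenever `q_i ≠ 0`. -/
theorem relative_division {k : Type*} [Field k] {n d r : ℕ}
    (ord : ModMonOrder n d)
    (U : Submodule (MvPolynomial (Fin n) k) (FreeMod k n d))
    (G : Finset (FreeMod k n d)) (hG : IsGB ord U G)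
    (h : Fin r → FreeMod k n d)
    (hne : ∀ i, h i ≠ 0)
    (hnf : ∀ i, IsNF ord U (h i) (h i))
    (f : FreeMod k n d) :
    ∃ (p : FreeMod k n d) (q : Fin r → MvPolynomial (Fin n) k),
      f - p - ∑ i, q i • h i ∈ U ∧
      (∀ m ∈ suppF p,
        (∀ g ∈ G, ¬ dvdV (ord.lmVec g) (mmVec m)) ∧
        (∀ i, ¬ dvdV (ord.lmVec (h i)) (mmVec m))) ∧
      (∀ i, q i ≠ 0 → ord.leB (ord.lmo (q i • h i)) (ord.lmo f)) := by

  classical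
  letI := ord.toOrd
  have hwb := RelDiv.wb_wf (α := ModMon n d) ord.wf
  have hwf : WellFounded (fun f g : FreeMod k n d =>
      ord.leB (ord.lmo f) (ord.lmo g) ∧ ord.lmo f ≠ ord.lmo g) := by
    refine Subrelation.wf ?_ (InvImage.wf ord.lmo hwb)
    rintro f g ⟨h1, h2⟩
    refine RelDiv.wb_lt_of_le_ne ?_ h2
    refine RelDiv.wb_le_of ?_
    cases hx : ord.lmo f with
    | bot => exact Or.inl rfl
    | coe a =>
      cases hy : ord.lmo g with
      | bot => rw [hx, hy] at h1; exact h1.elim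
      | coe b => rw [hx, hy] at h1; exact Or.inr ⟨a, b, rfl, rfl, h1⟩
  induction f using hwf.induction with
  | _ f IH =>
  by_cases hf0 : f = 0
  · subst hf0
    refine ⟨0, fun _ => 0, ?_, ?_, ?_⟩
    · have hz : (0 : FreeMod k n d) - 0 - ∑ i, (0 : MvPolynomial (Fin n) k) • h i = 0 := by
        simp
      rw [hz]; exact U.zero_mem
    · intro m hm; rw [RelDiv.suppF_zero] at hm; exact absurd hm (Finset.notMem_empty m)
    · intro i hi; exact absurd rfl hi
  · obtain ⟨m, hm⟩ := RelDiv.lmo_exists ord hf0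
    by_cases hA : mmVec m ∈ ord.lmSub U
    · -- leading monomial reducible by U
      obtain ⟨u, huU, hu0, mu, β, hmu, hmeq⟩ := RelDiv.mem_lmSub_elim ord hA m
        (by rw [RelDiv.suppF_mmVec]; exact Finset.mem_singleton_self m)
      have hred := RelDiv.reduce ord hm hmu hmeq
      set cp : MvPolynomial (Fin n) k := MvPolynomial.monomial β (ord.lc f / ord.lc u) with hcp
      obtain ⟨p, q, h1, h2, h3⟩ := IH (f - cp • u)
        ⟨by rw [hm]; exact hred.1, by rw [hm]; exact hred.2⟩
      refine ⟨p, q, ?_, h2, ?_⟩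
      · have heq : f - p - ∑ i, q i • h i = (f - cp • u - p - ∑ i, q i • h i) + cp • u := by
          abel
        rw [heq]
        exact U.add_mem h1 (U.smul_mem cp huU)
      · intro i hi
        exact RelDiv.leB_trans ord (h3 i hi) (by rw [hm]; exact hred.1)
    · by_cases hB : ∃ i, dvdV (ord.lmVec (h i)) (mmVec m)
      · -- leading monomial reducible by some h i
        obtain ⟨i₀, hdvd⟩ := hB
        obtain ⟨mu, hmu⟩ := RelDiv.lmo_exists ord (hne i₀)
        rw [RelDiv.lmVec_eq ord hmu] at hdvd
        obtain ⟨β, hmeq⟩ := RelDiv.dvd_mmVec hdvd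
        have hred := RelDiv.reduce ord hm hmu hmeq
        set cp : MvPolynomial (Fin n) k :=
          MvPolynomial.monomial β (ord.lc f / ord.lc (h i₀)) with hcp
        obtain ⟨p, q', h1, h2, h3⟩ := IH (f - cp • h i₀)
          ⟨by rw [hm]; exact hred.1, by rw [hm]; exact hred.2⟩
        have hlmcp : ord.lmo (cp • h i₀) = ↑m := by
          rw [hmeq, hcp]
          exact RelDiv.lmo_monomial_smul ord
            (div_ne_zero (RelDiv.lc_ne_zero ord hf0) (RelDiv.lc_ne_zero ord (hne i₀))) hmu
        set ps : Fin r → MvPolynomial (Fin n) k := Pi.single i₀ cp with hps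
        set qq : Fin r → MvPolynomial (Fin n) k := q' + ps with hqq
        refine ⟨p, qq, ?_, h2, ?_⟩
        · have hsum : ∑ i, qq i • h i
              = (∑ i, q' i • h i) + cp • h i₀ := by
            have hterm : ∀ i, qq i • h i
                = q' i • h i + ps i • h i := by
              intro i; rw [hqq, Pi.add_apply, add_smul]
            rw [Finset.sum_congr rfl fun i _ => hterm i, Finset.sum_add_distrib]
            congr 1
            rw [Fintype.sum_eq_single i₀ fun j hj => by
              rw [hps, Pi.single_eq_of_ne hj, zero_smul]]
            rw [hps, Pi.single_eq_same]
          rw [hsum]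
          have heq : f - p - ((∑ i, q' i • h i) + cp • h i₀)
              = (f - cp • h i₀) - p - ∑ i, q' i • h i := by abel
          rw [heq]
          exact h1
        · intro i hi
          by_cases hii : i = i₀
          · subst hii
            have hqh : qq i • h i = q' i • h i + cp • h i := by
              rw [hqq, Pi.add_apply, hps, Pi.single_eq_same, add_smul]
            rw [hqh, hm]
            apply RelDiv.lmo_le
            intro x hx
            rcases Finset.mem_union.mp (RelDiv.suppF_add_subset _ _ hx) with hx' | hx'
            · by_cases hq0 : q' i = 0
              · rw [hq0, zero_smul, RelDiv.suppF_zero] at hx'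
                exact absurd hx' (Finset.notMem_empty x)
              · refine RelDiv.leB_trans ord (RelDiv.le_lmo ord hx') ?_
                refine RelDiv.leB_trans ord (h3 i hq0) ?_
                exact hred.1
            · have := RelDiv.le_lmo ord hx'
              rwa [hlmcp] at this
          · have hq : qq i = q' i := by
              rw [hqq, Pi.add_apply, hps, Pi.single_eq_of_ne hii, add_zero]
            rw [hq] at hi ⊢
            exact RelDiv.leB_trans ord (h3 i hi) (by rw [hm]; exact hred.1)
      · -- leading monomial goes to the remainder
        push_neg at hB
        have hmm : ord.lmo (mmVec m : FreeMod k n d) = ↑m := by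
          show (suppF (mmVec m : FreeMod k n d)).max = _
          rw [RelDiv.suppF_mmVec]
          exact Finset.max_singleton
        have hmeq : m = ((0 : Fin n →₀ ℕ) + m.1, m.2) := Prod.ext (zero_add m.1).symm rfl
        have hred := RelDiv.reduce ord hm hmm hmeq
        set cp : MvPolynomial (Fin n) k :=
          MvPolynomial.monomial (0 : Fin n →₀ ℕ) (ord.lc f / ord.lc (mmVec m)) with hcp
        obtain ⟨p', q, h1, h2, h3⟩ := IH (f - cp • mmVec m)
          ⟨by rw [hm]; exact hred.1, by rw [hm]; exact hred.2⟩
        refine ⟨p' + cp • mmVec m, q, ?_, ?_, ?_⟩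
        · have heq : f - (p' + cp • mmVec m) - ∑ i, q i • h i
              = (f - cp • mmVec m) - p' - ∑ i, q i • h i := by abel
          rw [heq]
          exact h1
        · intro x hx
          rcases Finset.mem_union.mp (RelDiv.suppF_add_subset _ _ hx) with hx' | hx'
          · exact h2 x hx'
          · have hxm : x = m := by
              have himg := RelDiv.suppF_monomial_smul_subset hx'
              rw [RelDiv.suppF_mmVec, Finset.image_singleton, Finset.mem_singleton] at himg
              rw [himg]
              exact (Prod.ext (zero_add m.1) rfl)
            subst hxm
            constructor
            · intro g hg hdvd
              obtain ⟨pp, hpp⟩ := hdvd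
              by_cases hg0 : g = 0
              · rw [RelDiv.lmVec_eq_zero ord hg0, smul_zero] at hpp
                exact RelDiv.mmVec_ne_zero x hpp
              · apply hA
                have hgU : g ∈ U := by
                  rw [← hG.1]; exact Submodule.subset_span hg
                have hlv : ord.lmVec g ∈ ord.lmSub U :=
                  Submodule.subset_span ⟨g, hgU, hg0, rfl⟩
                rw [hpp]
                exact Submodule.smul_mem _ pp hlv
            · exact hB
        · intro i hi
          exact RelDiv.leB_trans ord (h3 i hi) (by rw [hm]; exact hred.1)
end

section
/- Let U ⊆ V ⊆ R^d be submodules and ≺ a fixed monomial order on R^d. Then V has exactly one reduced Gröbner basis relative to U; in particular a reduced Gröbner basis of V relative to U exists and is independent of any choice of generators of U and V. -/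
attribute [local instance] Classical.propDecidable

noncomputable section
namespace RelGB

open MvPolynomial

variable {k : Type*} [Field k] {n d : ℕ}

local notation "R" => MvPolynomial (Fin n) k

theorem mem_suppF {f : FreeMod k n d} {m : ModMon n d} :
    m ∈ suppF f ↔ (f m.2).coeff m.1 ≠ 0 := by
  constructor
  · intro h
    simp only [suppF, Finset.mem_biUnion, Finset.mem_univ, true_and, Finset.mem_image] at h
    obtain ⟨i, a, ha, rfl⟩ := h
    simpa [MvPolynomial.mem_support_iff] using ha
  · intro h
    simp only [suppF, Finset.mem_biUnion, Finset.mem_univ, true_and, Finset.mem_image]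
    exact ⟨m.2, m.1, by simpa [MvPolynomial.mem_support_iff] using h, rfl⟩

theorem not_mem_suppF {f : FreeMod k n d} {m : ModMon n d} :
    m ∉ suppF f ↔ (f m.2).coeff m.1 = 0 := by
  simp [mem_suppF]

theorem suppF_eq_empty {f : FreeMod k n d} : suppF f = ∅ ↔ f = 0 := by
  constructor
  · intro h
    funext i
    ext a
    have := Finset.eq_empty_iff_forall_notMem.mp h (a, i)
    rw [not_mem_suppF] at this
    simpa using this
  · rintro rfl
    apply Finset.eq_empty_iff_forall_notMem.mpr
    intro m
    rw [not_mem_suppF]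
    simp

theorem mmVec_apply (m : ModMon n d) (i : Fin d) :
    (mmVec m : FreeMod k n d) i = if m.2 = i then MvPolynomial.monomial m.1 (1 : k) else 0 := by
  rcases eq_or_ne m.2 i with h | h
  · subst h; simp [mmVec]
  · simp [mmVec, Pi.single_eq_of_ne (Ne.symm h), h]

theorem coeff_mmVec (m m' : ModMon n d) :
    ((mmVec m : FreeMod k n d) m'.2).coeff m'.1 = if m = m' then (1 : k) else 0 := by
  rw [mmVec_apply]
  rcases eq_or_ne m m' with rfl | h
  · simp [MvPolynomial.coeff_monomial]
  · rcases eq_or_ne m.2 m'.2 with h2 | h2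
    · have h1 : m.1 ≠ m'.1 := fun h1 => h (Prod.ext h1 h2)
      simp [h2, MvPolynomial.coeff_monomial, h1, if_neg h]
    · simp [h2, if_neg h]

theorem suppF_mmVec (m : ModMon n d) : suppF (mmVec m : FreeMod k n d) = {m} := by
  ext m'
  rw [mem_suppF, coeff_mmVec, Finset.mem_singleton]
  rcases eq_or_ne m m' with rfl | h
  · simp
  · simp [h, Ne.symm h]

theorem mmVec_ne_zero (m : ModMon n d) : (mmVec m : FreeMod k n d) ≠ 0 := by
  intro h
  have := suppF_mmVec (k := k) m
  rw [h, suppF_eq_empty.mpr rfl] at this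
  exact absurd this.symm (by simp)

theorem suppF_sub_subset (f g : FreeMod k n d) :
    suppF (f - g) ⊆ suppF f ∪ suppF g := by
  intro m hm
  rw [mem_suppF] at hm
  rw [Finset.mem_union, mem_suppF, mem_suppF]
  by_contra hc
  push_neg at hc
  apply hm
  simp only [Pi.sub_apply, MvPolynomial.coeff_sub, hc.1, hc.2, sub_zero]

theorem suppF_add_subset (f g : FreeMod k n d) :
    suppF (f + g) ⊆ suppF f ∪ suppF g := by
  intro m hm
  rw [mem_suppF] at hm
  rw [Finset.mem_union, mem_suppF, mem_suppF]
  by_contra hc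
  push_neg at hc
  apply hm
  simp only [Pi.add_apply, MvPolynomial.coeff_add, hc.1, hc.2, add_zero]

theorem suppF_smul_subset (p : R) (f : FreeMod k n d) {m' : ModMon n d}
    (h : m' ∈ suppF (p • f)) :
    ∃ a b, a ∈ p.support ∧ (b, m'.2) ∈ suppF f ∧ m'.1 = a + b := by
  classical
  rw [mem_suppF] at h
  have h2 : m'.1 ∈ (p * f m'.2).support := by
    rw [MvPolynomial.mem_support_iff]
    simpa using h
  have h3 := MvPolynomial.support_mul p (f m'.2) h2
  rw [Finset.mem_add] at h3
  obtain ⟨a, ha, b, hb, hab⟩ := h3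
  exact ⟨a, b, ha, mem_suppF.mpr (MvPolynomial.mem_support_iff.mp hb), hab.symm⟩

end RelGB
end
noncomputable section
namespace RelGB

open MvPolynomial

variable {k : Type*} [Field k] {n d : ℕ}

local notation "R" => MvPolynomial (Fin n) k

variable (ord : ModMonOrder n d)

theorem lmo_eq_bot {f : FreeMod k n d} : ord.lmo f = ⊥ ↔ f = 0 := by
  letI := ord.toOrd
  rw [ModMonOrder.lmo, Finset.max_eq_bot, suppF_eq_empty]

theorem lmo_eq_coe_iff {f : FreeMod k n d} {m : ModMon n d} :
    ord.lmo f = ↑m ↔ m ∈ suppF f ∧ ∀ m' ∈ suppF f, ord.toOrd.le m' m := by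
  letI := ord.toOrd
  constructor
  · intro h
    refine ⟨Finset.mem_of_max h, fun m' hm' => ?_⟩
    have h3 := Finset.le_max hm'
    rw [ModMonOrder.lmo] at h
    rw [h] at h3
    exact (@WithBot.coe_le_coe _ m' m ord.toOrd.toLE).mp h3
  · rintro ⟨h1, h2⟩
    rw [ModMonOrder.lmo]
    cases hmax : (suppF f).max with
    | bot =>
      rw [Finset.max_eq_bot] at hmax
      rw [hmax] at h1
      exact absurd h1 (Finset.notMem_empty m)
    | coe m'' =>
      have hm'' : m'' ∈ suppF f := Finset.mem_of_max hmax
      have hle1 : ord.toOrd.le m'' m := h2 m'' hm''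
      have hle2 : ord.toOrd.le m m'' := by
        have := Finset.le_max h1
        rw [hmax] at this
        exact (@WithBot.coe_le_coe _ m m'' ord.toOrd.toLE).mp this
      exact congrArg _ (ord.toOrd.le_antisymm _ _ hle1 hle2)

theorem exists_lmo {f : FreeMod k n d} (hf : f ≠ 0) : ∃ m : ModMon n d, ord.lmo f = ↑m := by
  cases h : ord.lmo f with
  | bot => exact absurd ((lmo_eq_bot ord).mp h) hf
  | coe m => exact ⟨m, rfl⟩

theorem lc_of_lmo {f : FreeMod k n d} {m : ModMon n d} (h : ord.lmo f = ↑m) :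
    ord.lc f = (f m.2).coeff m.1 := by
  rw [ModMonOrder.lc, h]
  rfl

theorem lmVec_of_lmo {f : FreeMod k n d} {m : ModMon n d} (h : ord.lmo f = ↑m) :
    ord.lmVec f = mmVec m := by
  rw [ModMonOrder.lmVec, h]
  rfl

theorem lc_ne_zero {f : FreeMod k n d} {m : ModMon n d} (h : ord.lmo f = ↑m) :
    ord.lc f ≠ 0 := by
  rw [lc_of_lmo ord h]
  exact mem_suppF.mp ((lmo_eq_coe_iff ord).mp h).1

/-- Divisibility between module monomials. -/
def DivLe (m m' : ModMon n d) : Prop := m.1 ≤ m'.1 ∧ m.2 = m'.2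

theorem divle_refl (m : ModMon n d) : DivLe m m := ⟨le_rfl, Eq.refl _⟩

theorem DivLe.trans {m₁ m₂ m₃ : ModMon n d} (h : DivLe m₁ m₂) (h' : DivLe m₂ m₃) :
    DivLe m₁ m₃ := ⟨h.1.trans h'.1, h.2.trans h'.2⟩

theorem DivLe.antisymm {m₁ m₂ : ModMon n d} (h : DivLe m₁ m₂) (h' : DivLe m₂ m₁) :
    m₁ = m₂ := Prod.ext (le_antisymm h.1 h'.1) h.2

theorem dvdV_mmVec_iff {m m' : ModMon n d} :
    dvdV (mmVec m : FreeMod k n d) (mmVec m') ↔ DivLe m m' := by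
  constructor
  · rintro ⟨p, hp⟩
    have key : ∀ i, (if m'.2 = i then MvPolynomial.monomial m'.1 (1:k) else 0)
        = p * (if m.2 = i then MvPolynomial.monomial m.1 (1:k) else 0) := by
      intro i
      have := congrFun hp i
      rw [mmVec_apply] at this
      rw [this, Pi.smul_apply, mmVec_apply, smul_eq_mul]
    have h2 : m.2 = m'.2 := by
      by_contra hne
      have := key m'.2
      rw [if_pos rfl, if_neg hne, mul_zero] at this
      have hco := congrArg (MvPolynomial.coeff m'.1) this
      rw [MvPolynomial.coeff_monomial, if_pos rfl, MvPolynomial.coeff_zero] at hco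
      exact one_ne_zero hco
    have h1 : m.1 ≤ m'.1 := by
      have := key m'.2
      rw [if_pos rfl, if_pos h2, mul_comm] at this
      have hsup : m'.1 ∈ (MvPolynomial.monomial m.1 (1:k) * p).support := by
        rw [← this, MvPolynomial.mem_support_iff, MvPolynomial.coeff_monomial, if_pos rfl]
        exact one_ne_zero
      have := MvPolynomial.support_mul _ p hsup
      rw [Finset.mem_add] at this
      obtain ⟨a, ha, b, hb, hab⟩ := this
      rw [MvPolynomial.support_monomial] at ha
      simp only [one_ne_zero, if_false, Finset.mem_singleton] at ha
      subst ha
      exact hab ▸ le_self_add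
    exact ⟨h1, h2⟩
  · rintro ⟨h1, h2⟩
    refine ⟨MvPolynomial.monomial (m'.1 - m.1) 1, ?_⟩
    funext i
    simp only [Pi.smul_apply, smul_eq_mul, mmVec_apply]
    rcases eq_or_ne m.2 i with hi | hi
    · rw [if_pos (h2 ▸ hi), if_pos hi, MvPolynomial.monomial_mul, one_mul,
        tsub_add_cancel_of_le h1]
    · rw [if_neg (fun hh => hi (h2.trans hh)), if_neg hi, mul_zero]

end RelGB
end
noncomputable section
namespace RelGB

open MvPolynomial

variable {k : Type*} [Field k] {n d : ℕ}

local notation "R" => MvPolynomial (Fin n) k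

variable (ord : ModMonOrder n d)

theorem suppF_shift (δ : Fin n →₀ ℕ) (f : FreeMod k n d) {m' : ModMon n d} :
    m' ∈ suppF ((MvPolynomial.monomial δ (1:k)) • f) ↔
      ∃ b, (b, m'.2) ∈ suppF f ∧ m'.1 = δ + b := by
  constructor
  · intro h
    obtain ⟨a, b, ha, hb, hab⟩ := suppF_smul_subset _ f h
    rw [MvPolynomial.support_monomial] at ha
    simp only [one_ne_zero, if_false, Finset.mem_singleton] at ha
    subst ha
    exact ⟨b, hb, hab⟩
  · rintro ⟨b, hb, hab⟩
    rw [mem_suppF]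
    simp only [Pi.smul_apply, smul_eq_mul]
    rw [hab, MvPolynomial.coeff_monomial_mul, one_mul]
    exact mem_suppF.mp hb

theorem lmo_shift {δ : Fin n →₀ ℕ} {f : FreeMod k n d} {m : ModMon n d}
    (h : ord.lmo f = ↑m) :
    ord.lmo ((MvPolynomial.monomial δ (1:k)) • f) = ↑((δ + m.1, m.2) : ModMon n d) := by
  obtain ⟨h1, h2⟩ := (lmo_eq_coe_iff ord).mp h
  rw [lmo_eq_coe_iff]
  constructor
  · rw [suppF_shift]
    exact ⟨m.1, by simpa using h1, rfl⟩
  · intro m' hm'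
    obtain ⟨b, hb, hab⟩ := (suppF_shift δ f).mp hm'
    have := h2 _ hb
    have := ord.add_le δ b m.1 m'.2 m.2 this
    obtain ⟨a2, i2⟩ := m'
    simp only at hab
    subst hab
    exact this

/-- The set of leading monomials of nonzero elements of `W`. -/
def LSet (W : Submodule R (FreeMod k n d)) : Set (ModMon n d) :=
  {m | ∃ f ∈ W, f ≠ 0 ∧ ord.lmo f = ↑m}

theorem LSet_mono {U V : Submodule R (FreeMod k n d)} (h : U ≤ V) :
    LSet ord U ⊆ LSet ord V := by
  rintro m ⟨f, hf, hf0, hlm⟩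
  exact ⟨f, h hf, hf0, hlm⟩

theorem LSet_upward {W : Submodule R (FreeMod k n d)} {m m' : ModMon n d}
    (hm : m ∈ LSet ord W) (hle : DivLe m m') : m' ∈ LSet ord W := by
  obtain ⟨f, hf, hf0, hlm⟩ := hm
  obtain ⟨hle1, hle2⟩ := hle
  refine ⟨(MvPolynomial.monomial (m'.1 - m.1) (1:k)) • f, Submodule.smul_mem _ _ hf, ?_, ?_⟩
  · intro hz
    have := lmo_shift ord (δ := m'.1 - m.1) hlm
    rw [hz, (lmo_eq_bot ord).mpr rfl] at this
    exact absurd this (by simp)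
  · rw [lmo_shift ord hlm, tsub_add_cancel_of_le hle1, hle2]

theorem lmSub_eq_span (W : Submodule R (FreeMod k n d)) :
    ord.lmSub W = Submodule.span R {v | ∃ m ∈ LSet ord W, v = mmVec m} := by
  rw [ModMonOrder.lmSub]
  congr 1
  ext v
  constructor
  · rintro ⟨f, hf, hf0, rfl⟩
    obtain ⟨m, hm⟩ := exists_lmo ord hf0
    exact ⟨m, ⟨f, hf, hf0, hm⟩, lmVec_of_lmo ord hm⟩
  · rintro ⟨m, ⟨f, hf, hf0, hm⟩, rfl⟩
    exact ⟨f, hf, hf0, (lmVec_of_lmo ord hm).symm⟩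

/-- The submodule of vectors all of whose support monomials are divisible by some
element of `S`. -/
def divSub (S : Set (ModMon n d)) : Submodule R (FreeMod k n d) where
  carrier := {v | ∀ m' ∈ suppF v, ∃ m ∈ S, DivLe m m'}
  zero_mem' := by
    intro m' hm'
    rw [suppF_eq_empty.mpr rfl] at hm'
    exact absurd hm' (Finset.notMem_empty _)
  add_mem' := by
    intro a b ha hb m' hm'
    rcases Finset.mem_union.mp (suppF_add_subset a b hm') with h | h
    · exact ha m' h
    · exact hb m' h
  smul_mem' := by
    intro p v hv m' hm'
    obtain ⟨a, b, _, hb, hab⟩ := suppF_smul_subset p v hm'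
    obtain ⟨m, hm, hle1, hle2⟩ := hv _ hb
    exact ⟨m, hm, hle1.trans (hab ▸ le_add_self), hle2⟩

theorem span_le_divSub (S : Set (ModMon n d)) :
    Submodule.span R {v | ∃ m ∈ S, v = mmVec m} ≤ divSub S := by
  rw [Submodule.span_le]
  rintro v ⟨m, hm, rfl⟩
  intro m' hm'
  rw [suppF_mmVec, Finset.mem_singleton] at hm'
  subst hm'
  exact ⟨_, hm, divle_refl _⟩

theorem mem_span_mmVec {S : Set (ModMon n d)} {m' : ModMon n d}
    (h : (mmVec m' : FreeMod k n d) ∈ Submodule.span R {v | ∃ m ∈ S, v = mmVec m}) :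
    ∃ m ∈ S, DivLe m m' := by
  have := span_le_divSub S h m'
  rw [suppF_mmVec] at this
  exact this (Finset.mem_singleton_self m')

theorem mmVec_mem_span_of_divle {S : Set (ModMon n d)} {m m' : ModMon n d}
    (hm : m ∈ S) (hle : DivLe m m') :
    (mmVec m' : FreeMod k n d) ∈ Submodule.span R {v | ∃ m ∈ S, v = mmVec m} := by
  obtain ⟨p, hp⟩ := (dvdV_mmVec_iff (k := k)).mpr hle
  rw [hp]
  exact Submodule.smul_mem _ p (Submodule.subset_span ⟨m, hm, rfl⟩)

theorem mmVec_mem_lmSub {W : Submodule R (FreeMod k n d)} {m : ModMon n d} :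
    (mmVec m : FreeMod k n d) ∈ ord.lmSub W ↔ m ∈ LSet ord W := by
  rw [lmSub_eq_span]
  constructor
  · intro h
    obtain ⟨m0, hm0, hle⟩ := mem_span_mmVec h
    exact LSet_upward ord hm0 hle
  · intro h
    exact Submodule.subset_span ⟨m, h, rfl⟩

end RelGB
end
noncomputable section
namespace RelGB

open MvPolynomial

variable {k : Type*} [Field k] {n d : ℕ}

local notation "R" => MvPolynomial (Fin n) k

variable (ord : ModMonOrder n d)

theorem coeff_smul_C (c : k) (g : FreeMod k n d) (m : ModMon n d) :
    ((((MvPolynomial.C c : R) • g) m.2).coeff m.1) = c * (g m.2).coeff m.1 := by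
  simp [MvPolynomial.coeff_C_mul]

theorem suppF_smul_C (c : k) (g : FreeMod k n d) :
    suppF ((MvPolynomial.C c : R) • g) ⊆ suppF g := by
  intro m hm
  rw [mem_suppF] at hm ⊢
  rw [coeff_smul_C] at hm
  exact fun h => hm (by rw [h, mul_zero])

/-- Dickson: every element of `S` has a divisor that is minimal in `S`. -/
theorem exists_min_div {S : Set (ModMon n d)} {m : ModMon n d} (hm : m ∈ S) :
    ∃ m0 ∈ S, DivLe m0 m ∧ ∀ m1 ∈ S, DivLe m1 m0 → m1 = m0 := by
  have hwf : WellFounded ((· < ·) : (Fin n →₀ ℕ) → (Fin n →₀ ℕ) → Prop) :=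
    (Finsupp.wellFoundedLT' (N := ℕ)).wf
  set T : Set (Fin n →₀ ℕ) := {a | (a, m.2) ∈ S ∧ a ≤ m.1} with hT
  have hne : T.Nonempty := ⟨m.1, by simpa using hm, le_rfl⟩
  obtain ⟨a0, ha0, hmin⟩ := hwf.has_min T hne
  refine ⟨(a0, m.2), ha0.1, ⟨ha0.2, rfl⟩, ?_⟩
  rintro ⟨a1, i1⟩ h1S ⟨hle, hi⟩
  simp only at hle hi
  subst hi
  have ha1T : a1 ∈ T := ⟨h1S, hle.trans ha0.2⟩
  have : a1 = a0 := by
    by_contra hne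
    exact hmin a1 ha1T (lt_of_le_of_ne hle hne)
  rw [this]

/-- The set of minimal elements of `S` is finite. -/
theorem finite_min_set (S : Set (ModMon n d)) :
    Set.Finite {m ∈ S | ∀ m1 ∈ S, DivLe m1 m → m1 = m} := by
  set T := {m ∈ S | ∀ m1 ∈ S, DivLe m1 m → m1 = m} with hT
  have hsub : T ⊆ ⋃ i : Fin d, (fun a => ((a, i) : ModMon n d)) ''
      {a | ((a, i) : ModMon n d) ∈ T} := by
    rintro ⟨a, i⟩ hm
    exact Set.mem_iUnion.mpr ⟨i, ⟨a, hm, rfl⟩⟩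
  refine Set.Finite.subset (Set.finite_iUnion fun i => Set.Finite.image _ ?_) hsub
  have hanti : IsAntichain (· ≤ ·) {a | ((a, i) : ModMon n d) ∈ T} := by
    rintro a ha b hb hne hle
    exact hne (congrArg Prod.fst (hb.2 (a, i) ha.1 ⟨hle, rfl⟩))
  exact hanti.finite_of_partiallyWellOrderedOn (Set.isPWO_of_wellQuasiOrderedLE _)

/-- Reduction: every `f` has a normal form modulo `V` supported below `lmo f`. -/
theorem exists_nf (V : Submodule R (FreeMod k n d)) :
    ∀ m : ModMon n d, ∀ f : FreeMod k n d, ord.lmo f = ↑m →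
      ∃ r, f - r ∈ V ∧ (∀ m' ∈ suppF r, m' ∉ LSet ord V) ∧
        (∀ m' ∈ suppF r, ord.toOrd.le m' m) := by
  intro m
  induction m using ord.wf.induction with
  | _ m IH =>
  intro f hf
  obtain ⟨hmem, hbound⟩ := (lmo_eq_coe_iff ord).mp hf
  have hcf : (f m.2).coeff m.1 ≠ 0 := mem_suppF.mp hmem
  by_cases hV : m ∈ LSet ord V
  · -- reduce the leading term by an element of V
    obtain ⟨g, hgV, hg0, hgl⟩ := hV
    have hcg : (g m.2).coeff m.1 ≠ 0 := mem_suppF.mp ((lmo_eq_coe_iff ord).mp hgl).1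
    set c : k := (f m.2).coeff m.1 / (g m.2).coeff m.1 with hc
    set f' : FreeMod k n d := f - (MvPolynomial.C c : R) • g with hf'
    have hcoeff : (f' m.2).coeff m.1 = 0 := by
      simp only [hf', Pi.sub_apply, MvPolynomial.coeff_sub]
      rw [coeff_smul_C, hc, div_mul_cancel₀ _ hcg, sub_self]
    have hsupp : ∀ m' ∈ suppF f', ord.toOrd.le m' m ∧ m' ≠ m := by
      intro m' hm'
      have hmem' := suppF_sub_subset f _ hm'
      rcases Finset.mem_union.mp hmem' with h | h
      · refine ⟨hbound m' h, fun he => ?_⟩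
        exact (not_mem_suppF.mpr (he ▸ hcoeff)) hm'
      · have := suppF_smul_C c g h
        refine ⟨((lmo_eq_coe_iff ord).mp hgl).2 m' this, fun he => ?_⟩
        exact (not_mem_suppF.mpr (he ▸ hcoeff)) hm'
    by_cases hz : f' = 0
    · refine ⟨0, ?_, by simp [suppF_eq_empty.mpr rfl], by simp [suppF_eq_empty.mpr rfl]⟩
      have : f = (MvPolynomial.C c : R) • g := by
        have := hz
        rw [hf', sub_eq_zero] at this
        exact this
      rw [sub_zero, this]
      exact Submodule.smul_mem _ _ hgV
    · obtain ⟨m1, hm1⟩ := exists_lmo ord hz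
      have hm1m : ord.toOrd.lt m1 m := by
        have h1 := hsupp m1 ((lmo_eq_coe_iff ord).mp hm1).1
        rcases (ord.toOrd.lt_iff_le_not_ge m1 m).mpr ⟨h1.1, fun hle => h1.2
          (ord.toOrd.le_antisymm _ _ h1.1 hle)⟩ with h
        exact h
      obtain ⟨r, hr1, hr2, hr3⟩ := IH m1 hm1m f' hm1
      refine ⟨r, ?_, hr2, fun m' hm' => ord.toOrd.le_trans _ _ _ (hr3 m' hm')
        ((ord.toOrd.lt_iff_le_not_ge m1 m).mp hm1m).1⟩
      have : f - r = (MvPolynomial.C c : R) • g + (f' - r) := by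
        rw [hf']; ring
      rw [this]
      exact Submodule.add_mem _ (Submodule.smul_mem _ _ hgV) hr1
  · -- the leading monomial is not reducible: move it to the remainder
    set t : FreeMod k n d := (MvPolynomial.C ((f m.2).coeff m.1) : R) • mmVec m with ht
    have hsuppt : suppF t ⊆ {m} := by
      intro m' hm'
      have := suppF_smul_C _ _ hm'
      rwa [suppF_mmVec] at this
    have hcoefft : (t m.2).coeff m.1 = (f m.2).coeff m.1 := by
      rw [ht, coeff_smul_C, coeff_mmVec, if_pos rfl, mul_one]
    set f' : FreeMod k n d := f - t with hf'
    have hcoeff : (f' m.2).coeff m.1 = 0 := by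
      simp only [hf', Pi.sub_apply, MvPolynomial.coeff_sub, hcoefft, sub_self]
    have hsupp : ∀ m' ∈ suppF f', ord.toOrd.le m' m ∧ m' ≠ m := by
      intro m' hm'
      have hmem' := suppF_sub_subset f t hm'
      have hne : m' ≠ m := fun he => (not_mem_suppF.mpr (he ▸ hcoeff)) hm'
      rcases Finset.mem_union.mp hmem' with h | h
      · exact ⟨hbound m' h, hne⟩
      · exact absurd (Finset.mem_singleton.mp (hsuppt h)) hne
    by_cases hz : f' = 0
    · refine ⟨f, by rw [sub_self]; exact Submodule.zero_mem _, ?_, ?_⟩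
      · intro m' hm'
        have hft : f = t := by rw [hf', sub_eq_zero] at hz; exact hz
        rw [hft] at hm'
        rw [Finset.mem_singleton.mp (hsuppt hm')]
        exact hV
      · exact hbound
    · obtain ⟨m1, hm1⟩ := exists_lmo ord hz
      have hm1m : ord.toOrd.lt m1 m := by
        have h1 := hsupp m1 ((lmo_eq_coe_iff ord).mp hm1).1
        exact (ord.toOrd.lt_iff_le_not_ge m1 m).mpr ⟨h1.1, fun hle => h1.2
          (ord.toOrd.le_antisymm _ _ h1.1 hle)⟩
      obtain ⟨r', hr1, hr2, hr3⟩ := IH m1 hm1m f' hm1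
      refine ⟨t + r', ?_, ?_, ?_⟩
      · have : f - (t + r') = f' - r' := by rw [hf']; ring
        rw [this]; exact hr1
      · intro m' hm'
        rcases Finset.mem_union.mp (suppF_add_subset t r' hm') with h | h
        · rwa [Finset.mem_singleton.mp (hsuppt h)]
        · exact hr2 m' h
      · intro m' hm'
        rcases Finset.mem_union.mp (suppF_add_subset t r' hm') with h | h
        · rw [Finset.mem_singleton.mp (hsuppt h)]; exact ord.toOrd.le_refl m
        · exact ord.toOrd.le_trans _ _ _ (hr3 m' h)
            ((ord.toOrd.lt_iff_le_not_ge m1 m).mp hm1m).1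

end RelGB
end
noncomputable section
namespace RelGB

open MvPolynomial

variable {k : Type*} [Field k] {n d : ℕ}

local notation "R" => MvPolynomial (Fin n) k

variable (ord : ModMonOrder n d)

theorem exists_reduced_elt (U V : Submodule R (FreeMod k n d)) (hUV : U ≤ V)
    {m : ModMon n d} (hmV : m ∈ LSet ord V) (hmU : m ∉ LSet ord U) :
    ∃ h : FreeMod k n d, h ∈ V ∧ h ∉ U ∧ ord.lmo h = ↑m ∧ (h m.2).coeff m.1 = 1 ∧
      (∀ m' ∈ suppF h, m' ≠ m → m' ∉ LSet ord V) ∧ (∀ m' ∈ suppF h, m' ∉ LSet ord U) := by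
  obtain ⟨f0, hf0V, hf00, hf0l⟩ := hmV
  have hc0 : (f0 m.2).coeff m.1 ≠ 0 := mem_suppF.mp ((lmo_eq_coe_iff ord).mp hf0l).1
  set f : FreeMod k n d := (MvPolynomial.C ((f0 m.2).coeff m.1)⁻¹ : R) • f0 with hfdef
  have hfV : f ∈ V := Submodule.smul_mem _ _ hf0V
  have hfc : (f m.2).coeff m.1 = 1 := by
    rw [hfdef, coeff_smul_C, inv_mul_cancel₀ hc0]
  have hfbound : ∀ m' ∈ suppF f, ord.toOrd.le m' m := by
    intro m' hm'
    exact ((lmo_eq_coe_iff ord).mp hf0l).2 m' (suppF_smul_C _ _ hm')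
  set tail : FreeMod k n d := f - mmVec m with htail
  have htailc : (tail m.2).coeff m.1 = 0 := by
    simp only [htail, Pi.sub_apply, MvPolynomial.coeff_sub, hfc]
    rw [coeff_mmVec, if_pos rfl, sub_self]
  have htails : ∀ m' ∈ suppF tail, ord.toOrd.le m' m ∧ m' ≠ m := by
    intro m' hm'
    have hne : m' ≠ m := fun he => (not_mem_suppF.mpr (he ▸ htailc)) hm'
    rcases Finset.mem_union.mp (suppF_sub_subset f _ hm') with h | h
    · exact ⟨hfbound m' h, hne⟩
    · rw [suppF_mmVec, Finset.mem_singleton] at h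
      exact absurd h hne
  -- get a remainder r with tail - r ∈ V, supp r outside LSet V, supp r ≺ m
  have hr : ∃ r : FreeMod k n d, tail - r ∈ V ∧ (∀ m' ∈ suppF r, m' ∉ LSet ord V) ∧
      (∀ m' ∈ suppF r, ord.toOrd.le m' m ∧ m' ≠ m) := by
    by_cases hz : tail = 0
    · exact ⟨0, by rw [hz, sub_zero]; exact Submodule.zero_mem _,
        by simp [suppF_eq_empty.mpr rfl], by simp [suppF_eq_empty.mpr rfl]⟩
    · obtain ⟨m1, hm1⟩ := exists_lmo ord hz
      have hm1lt : ord.toOrd.lt m1 m := by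
        have h1 := htails m1 ((lmo_eq_coe_iff ord).mp hm1).1
        exact (ord.toOrd.lt_iff_le_not_ge m1 m).mpr ⟨h1.1, fun hle => h1.2
          (ord.toOrd.le_antisymm _ _ h1.1 hle)⟩
      obtain ⟨r, hr1, hr2, hr3⟩ := exists_nf ord V m1 tail hm1
      refine ⟨r, hr1, hr2, fun m' hm' => ?_⟩
      have hle : ord.toOrd.le m' m := ord.toOrd.le_trans _ _ _ (hr3 m' hm')
        ((ord.toOrd.lt_iff_le_not_ge m1 m).mp hm1lt).1
      refine ⟨hle, fun he => ?_⟩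
      subst he
      exact ((ord.toOrd.lt_iff_le_not_ge m1 m').mp hm1lt).2 (hr3 m' hm')
  obtain ⟨r, hrV, hrLV, hrb⟩ := hr
  set h : FreeMod k n d := mmVec m + r with hhdef
  have hfh : f - h = tail - r := by rw [hhdef, htail]; ring
  have hhV : h ∈ V := by
    have : h = f - (tail - r) := by rw [hhdef, htail]; ring
    rw [this]
    exact Submodule.sub_mem _ hfV hrV
  have hmr : m ∉ suppF r := fun hm' => (hrb m hm').2 rfl
  have hhc : (h m.2).coeff m.1 = 1 := by
    simp only [hhdef, Pi.add_apply, MvPolynomial.coeff_add]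
    rw [coeff_mmVec, if_pos rfl, not_mem_suppF.mp hmr, add_zero]
  have hhsupp : ∀ m' ∈ suppF h, m' = m ∨ m' ∈ suppF r := by
    intro m' hm'
    rcases Finset.mem_union.mp (suppF_add_subset _ _ hm') with hh | hh
    · rw [suppF_mmVec, Finset.mem_singleton] at hh
      exact Or.inl hh
    · exact Or.inr hh
  have hhl : ord.lmo h = ↑m := by
    rw [lmo_eq_coe_iff]
    refine ⟨mem_suppF.mpr (by rw [hhc]; exact one_ne_zero), fun m' hm' => ?_⟩
    rcases hhsupp m' hm' with he | hh
    · exact he ▸ ord.toOrd.le_refl m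
    · exact (hrb m' hh).1
  have hhU : h ∉ U := by
    intro hU
    exact hmU ⟨h, hU, fun hz => by
      rw [hz, (lmo_eq_bot ord).mpr rfl] at hhl; exact absurd hhl (by simp), hhl⟩
  refine ⟨h, hhV, hhU, hhl, hhc, ?_, ?_⟩
  · intro m' hm' hne
    rcases hhsupp m' hm' with he | hh
    · exact absurd he hne
    · exact hrLV m' hh
  · intro m' hm'
    rcases hhsupp m' hm' with he | hh
    · exact he ▸ hmU
    · exact fun hU => hrLV m' hh (LSet_mono ord hUV hU)

/-- The canonical set of leading monomials: minimal elements of `LSet V` outside `LSet U`. -/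
def MS (U V : Submodule R (FreeMod k n d)) : Set (ModMon n d) :=
  {m | m ∈ LSet ord V ∧ m ∉ LSet ord U ∧ ∀ m1 ∈ LSet ord V, DivLe m1 m → m1 = m}

theorem MS_finite (U V : Submodule R (FreeMod k n d)) : (MS ord U V).Finite := by
  refine Set.Finite.subset (finite_min_set (LSet ord V)) ?_
  rintro m ⟨h1, _, h3⟩
  exact ⟨h1, h3⟩

end RelGB
end
noncomputable section
namespace RelGB

open MvPolynomial

variable {k : Type*} [Field k] {n d : ℕ}

local notation "R" => MvPolynomial (Fin n) k

variable (ord : ModMonOrder n d)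

theorem lmSub_mono {U V : Submodule R (FreeMod k n d)} (h : U ≤ V) :
    ord.lmSub U ≤ ord.lmSub V := by
  rw [lmSub_eq_span, lmSub_eq_span]
  apply Submodule.span_mono
  rintro v ⟨m, hm, rfl⟩
  exact ⟨m, LSet_mono ord h hm, rfl⟩

theorem exists_redRelGB (U V : Submodule R (FreeMod k n d)) (hUV : U ≤ V) :
    ∃ H : Finset (FreeMod k n d), IsRedRelGB ord U V H := by
  classical
  have hch : ∀ m ∈ MS ord U V, ∃ h : FreeMod k n d,
      h ∈ V ∧ h ∉ U ∧ ord.lmo h = ↑m ∧ (h m.2).coeff m.1 = 1 ∧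
      (∀ m' ∈ suppF h, m' ≠ m → m' ∉ LSet ord V) ∧ (∀ m' ∈ suppF h, m' ∉ LSet ord U) :=
    fun m hm => exists_reduced_elt ord U V hUV hm.1 hm.2.1
  choose! F hF1 hF2 hF3 hF4 hF5 hF6 using hch
  set H : Finset (FreeMod k n d) := (MS_finite ord U V).toFinset.image F with hH
  have hmemH : ∀ h ∈ H, ∃ m ∈ MS ord U V, h = F m := by
    intro h hh
    rw [hH, Finset.mem_image] at hh
    obtain ⟨m, hm, rfl⟩ := hh
    exact ⟨m, (Set.Finite.mem_toFinset _).mp hm, rfl⟩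
  have hFmem : ∀ m ∈ MS ord U V, F m ∈ H := by
    intro m hm
    rw [hH, Finset.mem_image]
    exact ⟨m, (Set.Finite.mem_toFinset _).mpr hm, rfl⟩
  have himg : ord.lmVec '' (H : Set (FreeMod k n d))
      = {v | ∃ m ∈ MS ord U V, v = mmVec m} := by
    ext v
    constructor
    · rintro ⟨h, hh, rfl⟩
      obtain ⟨m, hm, rfl⟩ := hmemH h hh
      exact ⟨m, hm, lmVec_of_lmo ord (hF3 m hm)⟩
    · rintro ⟨m, hm, rfl⟩
      exact ⟨F m, hFmem m hm, lmVec_of_lmo ord (hF3 m hm)⟩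
  refine ⟨H, ⟨⟨?_, ?_, ?_⟩, ?_⟩, ?_⟩
  · -- H ⊆ V \ U
    intro h hh
    obtain ⟨m, hm, rfl⟩ := hmemH h hh
    exact ⟨hF1 m hm, hF2 m hm⟩
  · -- support outside lm U
    intro h hh m' hm'
    obtain ⟨m, hm, rfl⟩ := hmemH h hh
    intro hmem
    exact hF6 m hm m' hm' ((mmVec_mem_lmSub ord).mp hmem)
  · -- span condition
    rw [himg]
    apply le_antisymm
    · refine sup_le ?_ (lmSub_mono ord hUV)
      rw [Submodule.span_le]
      rintro v ⟨m, hm, rfl⟩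
      exact (mmVec_mem_lmSub ord).mpr hm.1
    · rw [lmSub_eq_span ord V, Submodule.span_le]
      rintro v ⟨m'', hm'', rfl⟩
      obtain ⟨m0, hm0, hdiv, hmin⟩ := exists_min_div hm''
      by_cases hU : m0 ∈ LSet ord U
      · exact Submodule.mem_sup_right
          ((mmVec_mem_lmSub ord).mpr (LSet_upward ord hU hdiv))
      · have hm0MS : m0 ∈ MS ord U V := ⟨hm0, hU, hmin⟩
        exact Submodule.mem_sup_left (mmVec_mem_span_of_divle hm0MS hdiv)
  · -- pairwise non-divisibility
    intro h hh h' hh' hne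
    obtain ⟨m, hm, rfl⟩ := hmemH h hh
    obtain ⟨m', hm', rfl⟩ := hmemH h' hh'
    rw [lmVec_of_lmo ord (hF3 m hm), lmVec_of_lmo ord (hF3 m' hm')]
    intro hd
    have hdle : DivLe m m' := (dvdV_mmVec_iff (k := k)).mp hd
    exact hne (congrArg F (hm'.2.2 m hm.1 hdle))
  · -- reducedness
    intro h hh
    obtain ⟨m, hm, rfl⟩ := hmemH h hh
    constructor
    · rw [lc_of_lmo ord (hF3 m hm)]
      exact hF4 m hm
    · intro m' hm'
      rw [lmVec_of_lmo ord (hF3 m hm)] at hm'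
      have hne : m' ≠ m := by
        intro he
        apply not_mem_suppF.mpr _ hm'
        rw [he]
        simp only [Pi.sub_apply, MvPolynomial.coeff_sub]
        rw [hF4 m hm, coeff_mmVec, if_pos rfl, sub_self]
      have hsupp : m' ∈ suppF (F m) := by
        rcases Finset.mem_union.mp (suppF_sub_subset _ _ hm') with hh2 | hh2
        · exact hh2
        · rw [suppF_mmVec, Finset.mem_singleton] at hh2
          exact absurd hh2 hne
      intro hmem
      exact hF5 m hm m' hsupp hne ((mmVec_mem_lmSub ord).mp hmem)

end RelGB
end
noncomputable section
namespace RelGB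

open MvPolynomial

variable {k : Type*} [Field k] {n d : ℕ}

local notation "R" => MvPolynomial (Fin n) k

variable (ord : ModMonOrder n d)

theorem ne_zero_of_mem {U V : Submodule R (FreeMod k n d)} {H : Finset (FreeMod k n d)} (hH : IsRedRelGB ord U V H)
    {h : FreeMod k n d} (hh : h ∈ H) : h ≠ 0 :=
  fun h0 => (hH.1.1.1 hh).2 (h0 ▸ U.zero_mem)

/-- Every monomial of `LSet V` is divisible by a leading monomial of `H` or lies in
`LSet U`. -/
theorem div_of_redGB {U V : Submodule R (FreeMod k n d)} {H : Finset (FreeMod k n d)} (hH : IsRedRelGB ord U V H)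
    {m1 : ModMon n d} (hm1 : m1 ∈ LSet ord V) :
    (∃ h ∈ H, ∃ mh : ModMon n d, ord.lmo h = ↑mh ∧ DivLe mh m1) ∨ m1 ∈ LSet ord U := by
  have hmem : (mmVec m1 : FreeMod k n d) ∈
      Submodule.span R (ord.lmVec '' (H : Set (FreeMod k n d))) ⊔ ord.lmSub U := by
    rw [hH.1.1.2.2]
    exact (mmVec_mem_lmSub ord).mpr hm1
  rw [lmSub_eq_span, ← Submodule.span_union] at hmem
  have hset : (ord.lmVec '' (H : Set (FreeMod k n d))
      ∪ {v | ∃ m ∈ LSet ord U, v = mmVec m})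
      = {v | ∃ m ∈ ({m : ModMon n d | ∃ h ∈ H, ord.lmo h = ↑m} ∪ LSet ord U),
          v = mmVec m} := by
    ext v
    constructor
    · rintro (⟨h, hh, rfl⟩ | ⟨m, hm, rfl⟩)
      · obtain ⟨mh, hmh⟩ := exists_lmo ord (ne_zero_of_mem ord hH hh)
        exact ⟨mh, Or.inl ⟨h, hh, hmh⟩, lmVec_of_lmo ord hmh⟩
      · exact ⟨m, Or.inr hm, rfl⟩
    · rintro ⟨m, hm | hm, rfl⟩
      · obtain ⟨h, hh, hmh⟩ := hm
        exact Or.inl ⟨h, hh, lmVec_of_lmo ord hmh⟩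
      · exact Or.inr ⟨m, hm, rfl⟩
  rw [hset] at hmem
  obtain ⟨m2, hm2, hdiv⟩ := mem_span_mmVec hmem
  rcases hm2 with hm2 | hm2
  · obtain ⟨h, hh, hmh⟩ := hm2
    exact Or.inl ⟨h, hh, m2, hmh, hdiv⟩
  · exact Or.inr (LSet_upward ord hm2 hdiv)

theorem lm_mem_MS {U V : Submodule R (FreeMod k n d)} {H : Finset (FreeMod k n d)} (hH : IsRedRelGB ord U V H)
    {h : FreeMod k n d} (hh : h ∈ H) {m : ModMon n d} (hlm : ord.lmo h = ↑m) :
    m ∈ MS ord U V := by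
  have hV : m ∈ LSet ord V := ⟨h, (hH.1.1.1 hh).1, ne_zero_of_mem ord hH hh, hlm⟩
  have hU : m ∉ LSet ord U := by
    intro hU
    exact hH.1.1.2.1 h hh m ((lmo_eq_coe_iff ord).mp hlm).1 ((mmVec_mem_lmSub ord).mpr hU)
  refine ⟨hV, hU, fun m1 hm1 hdiv => ?_⟩
  rcases div_of_redGB ord hH hm1 with ⟨h', hh', mh', hmh', hdiv'⟩ | hLU
  · have hdivm : DivLe mh' m := hdiv'.trans hdiv
    by_cases hhe : h' = h
    · subst hhe
      have : mh' = m := by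
        rw [hlm] at hmh'
        exact_mod_cast hmh'.symm
      subst this
      exact DivLe.antisymm hdiv hdiv'
    · exfalso
      apply hH.1.2 h' hh' h hh hhe
      rw [lmVec_of_lmo ord hmh', lmVec_of_lmo ord hlm]
      exact (dvdV_mmVec_iff (k := k)).mpr hdivm
  · exact absurd (LSet_upward ord hLU hdiv) hU

theorem MS_mem_lm {U V : Submodule R (FreeMod k n d)} {H : Finset (FreeMod k n d)} (hH : IsRedRelGB ord U V H)
    {m : ModMon n d} (hm : m ∈ MS ord U V) :
    ∃ h ∈ H, ord.lmo h = ↑m := by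
  rcases div_of_redGB ord hH hm.1 with ⟨h, hh, mh, hmh, hdiv⟩ | hLU
  · have hmhV : mh ∈ LSet ord V := ⟨h, (hH.1.1.1 hh).1, ne_zero_of_mem ord hH hh, hmh⟩
    have : mh = m := hm.2.2 mh hmhV hdiv
    exact ⟨h, hh, this ▸ hmh⟩
  · exact absurd hLU hm.2.1

theorem elem_eq {U V : Submodule R (FreeMod k n d)} {H H' : Finset (FreeMod k n d)} (hH : IsRedRelGB ord U V H)
    (hH' : IsRedRelGB ord U V H') {h h' : FreeMod k n d} (hh : h ∈ H) (hh' : h' ∈ H')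
    {m : ModMon n d} (hlm : ord.lmo h = ↑m) (hlm' : ord.lmo h' = ↑m) : h = h' := by
  by_contra hne
  have hg0 : h - h' ≠ 0 := sub_ne_zero.mpr hne
  have hgV : h - h' ∈ V := Submodule.sub_mem _ (hH.1.1.1 hh).1 (hH'.1.1.1 hh').1
  obtain ⟨mg, hmg⟩ := exists_lmo ord hg0
  have hmgV : mg ∈ LSet ord V := ⟨h - h', hgV, hg0, hmg⟩
  have hch : (h m.2).coeff m.1 = 1 := by
    have := (hH.2 h hh).1
    rwa [lc_of_lmo ord hlm] at this
  have hch' : (h' m.2).coeff m.1 = 1 := by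
    have := (hH'.2 h' hh').1
    rwa [lc_of_lmo ord hlm'] at this
  have hmgne : mg ≠ m := by
    intro he
    apply not_mem_suppF.mpr _ ((lmo_eq_coe_iff ord).mp hmg).1
    rw [he]
    simp only [Pi.sub_apply, MvPolynomial.coeff_sub, hch, hch', sub_self]
  have htail : ∀ (g : FreeMod k n d), g ∈ ({h, h'} : Set (FreeMod k n d)) →
      mg ∈ suppF g → False := by
    rintro g (rfl | rfl) hmem
    · apply (hH.2 g hh).2 mg _ ((mmVec_mem_lmSub ord).mpr hmgV)
      rw [lmVec_of_lmo ord hlm, mem_suppF]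
      simp only [Pi.sub_apply, MvPolynomial.coeff_sub]
      rw [coeff_mmVec, if_neg (Ne.symm hmgne), sub_zero]
      exact mem_suppF.mp hmem
    · apply (hH'.2 g hh').2 mg _ ((mmVec_mem_lmSub ord).mpr hmgV)
      rw [lmVec_of_lmo ord hlm', mem_suppF]
      simp only [Pi.sub_apply, MvPolynomial.coeff_sub]
      rw [coeff_mmVec, if_neg (Ne.symm hmgne), sub_zero]
      exact mem_suppF.mp hmem
  rcases Finset.mem_union.mp (suppF_sub_subset h h' ((lmo_eq_coe_iff ord).mp hmg).1)
    with hmem | hmem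
  · exact htail h (Or.inl rfl) hmem
  · exact htail h' (Or.inr rfl) hmem

theorem redGB_unique {U V : Submodule R (FreeMod k n d)} {H H' : Finset (FreeMod k n d)} (hH : IsRedRelGB ord U V H)
    (hH' : IsRedRelGB ord U V H') : H = H' := by
  have key : ∀ (H₁ H₂ : Finset (FreeMod k n d)), IsRedRelGB ord U V H₁ →
      IsRedRelGB ord U V H₂ → ∀ h ∈ H₁, h ∈ H₂ := by
    intro H₁ H₂ h₁ h₂ h hh
    obtain ⟨m, hm⟩ := exists_lmo ord (ne_zero_of_mem ord h₁ hh)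
    obtain ⟨h', hh', hm'⟩ := MS_mem_lm ord h₂ (lm_mem_MS ord h₁ hh hm)
    rw [elem_eq ord h₁ h₂ hh hh' hm hm']
    exact hh'
  ext h
  exact ⟨fun hh => key H H' hH hH' h hh, fun hh => key H' H hH' hH h hh⟩

end RelGB
end


/-- **Relative Buchberger's theorem.** Let `U ⊆ V ⊆ R^d` be submodules and `≺` a fixed
monomial order on `R^d`. Then `V` has exactly one reduced Gröbner basis relative to `U`. -/
theorem unique_reduced_relative_groebner_basis {k : Type*} [Field k] {n d : ℕ}
    (ord : ModMonOrder n d)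
    (U V : Submodule (MvPolynomial (Fin n) k) (FreeMod k n d))
    (hUV : U ≤ V) :
    ∃! H : Finset (FreeMod k n d), IsRedRelGB ord U V H := by
  obtain ⟨H, hH⟩ := RelGB.exists_redRelGB ord U V hUV
  exact ⟨H, hH, fun H' hH' => RelGB.redGB_unique ord hH' hH⟩
end

section
/- Let U ⊆ V ⊆ R^d be submodules, ≺ a monomial order on R^d, G a Gröbner basis of U, and H = {h_1,…,h_t} ⊆ V∖U a finite set whose elements are supported on module monomials outside lm(U). Then the following are equivalent: (i) H is a Gröbner basis of V relative to U; (ii) H ∪ G is a Gröbner basis of V; (iii) every f ∈ V has a relative standard representation f = g + Σ_{i=1}^t q_i h_i with g ∈ U, q_i ∈ R, and lm(q_i h_i) ⪯ lm(f) for each i with q_i ≠ 0. -/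
attribute [local instance] Classical.propDecidable

noncomputable section Aux

open MvPolynomial

variable {k : Type*} [Field k] {n d : ℕ}

/-- coefficient of `f` at module monomial `m` -/
def mcoeff (m : ModMon n d) (f : FreeMod k n d) : k := (f m.2).coeff m.1

lemma mcoeff_add (m : ModMon n d) (f g : FreeMod k n d) :
    mcoeff m (f + g) = mcoeff m f + mcoeff m g := by
  simp [mcoeff]

lemma mcoeff_sub (m : ModMon n d) (f g : FreeMod k n d) :
    mcoeff m (f - g) = mcoeff m f - mcoeff m g := by
  simp [mcoeff]

lemma mcoeff_sum {α : Type*} (m : ModMon n d) (s : Finset α) (F : α → FreeMod k n d) :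
    mcoeff m (∑ a ∈ s, F a) = ∑ a ∈ s, mcoeff m (F a) := by
  simp [mcoeff, MvPolynomial.coeff_sum]

lemma mcoeff_smul (m : ModMon n d) (p : MvPolynomial (Fin n) k) (f : FreeMod k n d) :
    mcoeff m (p • f) = MvPolynomial.coeff m.1 (p * f m.2) := by
  simp [mcoeff, Pi.smul_apply, smul_eq_mul]

lemma mem_suppF_iff {m : ModMon n d} {f : FreeMod k n d} :
    m ∈ suppF f ↔ mcoeff m f ≠ 0 := by
  obtain ⟨a, i⟩ := m
  simp only [suppF, Finset.mem_biUnion, Finset.mem_univ, true_and, Finset.mem_image,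
    MvPolynomial.mem_support_iff, mcoeff, Prod.mk.injEq]
  constructor
  · rintro ⟨j, b, hb, rfl, rfl⟩; exact hb
  · intro h; exact ⟨i, a, h, rfl, rfl⟩

lemma eq_zero_of_mcoeff {f : FreeMod k n d} (h : ∀ m, mcoeff m f = 0) : f = 0 := by
  funext i; ext a; exact h (a, i)

lemma suppF_eq_empty_iff {f : FreeMod k n d} : suppF f = ∅ ↔ f = 0 := by
  rw [Finset.eq_empty_iff_forall_notMem]
  constructor
  · intro h; exact eq_zero_of_mcoeff fun m => by
      by_contra hc; exact h m (mem_suppF_iff.2 hc)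
  · rintro rfl m hm; rw [mem_suppF_iff] at hm; exact hm (by simp [mcoeff])

namespace ModMonOrder

variable (ord : ModMonOrder n d)

lemma lmo_eq_bot_iff {f : FreeMod k n d} : ord.lmo f = ⊥ ↔ f = 0 := by
  rw [ModMonOrder.lmo, @Finset.max_eq_bot _ ord.toOrd, suppF_eq_empty_iff]

lemma lmo_cases (f : FreeMod k n d) : (f = 0 ∧ ord.lmo f = ⊥) ∨ ∃ m : ModMon n d, ord.lmo f = ↑m := by
  cases h : ord.lmo f with
  | bot => exact Or.inl ⟨(ord.lmo_eq_bot_iff).1 h, rfl⟩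
  | coe m => exact Or.inr ⟨m, rfl⟩

lemma lmo_eq_coe {f : FreeMod k n d} (h : f ≠ 0) : ∃ m : ModMon n d, ord.lmo f = ↑m := by
  rcases ord.lmo_cases f with ⟨h0, _⟩ | hm
  · exact absurd h0 h
  · exact hm

lemma mem_suppF_of_lmo {m : ModMon n d} {f : FreeMod k n d} (h : ord.lmo f = ↑m) :
    m ∈ suppF f :=
  @Finset.mem_of_max _ ord.toOrd _ _ h

lemma le_of_mem_of_lmo {m m' : ModMon n d} {f : FreeMod k n d} (h : ord.lmo f = ↑m)
    (h' : m' ∈ suppF f) : ord.toOrd.le m' m := by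
  have hne : (suppF f).Nonempty := ⟨m', h'⟩
  have hc := @Finset.coe_max' _ ord.toOrd _ hne
  rw [ModMonOrder.lmo] at h
  rw [h] at hc
  have : @Finset.max' _ ord.toOrd _ hne = m := WithBot.coe_inj.1 hc
  have h2 := @Finset.le_max' _ ord.toOrd _ m' h'
  rwa [this] at h2

lemma leB_bot (x : WithBot (ModMon n d)) : ord.leB ⊥ x := trivial

lemma leB_coe {a b : ModMon n d} : ord.leB ↑a ↑b ↔ ord.toOrd.le a b := Iff.rfl

lemma not_leB_coe_bot (a : ModMon n d) : ¬ ord.leB ↑a ⊥ := fun h => h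

lemma leB_refl (x : WithBot (ModMon n d)) : ord.leB x x := by
  cases x with
  | bot => trivial
  | coe a => exact ord.toOrd.le_refl a

lemma leB_trans {x y z : WithBot (ModMon n d)} (h1 : ord.leB x y) (h2 : ord.leB y z) :
    ord.leB x z := by
  cases x with
  | bot => trivial
  | coe a => cases y with
    | bot => exact absurd h1 (ord.not_leB_coe_bot a)
    | coe b => cases z with
      | bot => exact absurd h2 (ord.not_leB_coe_bot b)
      | coe c => exact ord.toOrd.le_trans a b c h1 h2

/-- if every support monomial of `f` is `≤ m`, then `lmo f ≤ m`. -/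
lemma lmo_le {m : ModMon n d} {f : FreeMod k n d}
    (h : ∀ m' ∈ suppF f, ord.toOrd.le m' m) :
    ord.leB (ord.lmo f) ↑m := by
  rcases ord.lmo_cases f with ⟨_, h0⟩ | ⟨m'', hm⟩
  · rw [h0]; trivial
  · rw [hm]; exact h m'' (ord.mem_suppF_of_lmo hm)

lemma lmo_lt_cases {m : ModMon n d} {f : FreeMod k n d}
    (h : ∀ m' ∈ suppF f, ord.toOrd.lt m' m) :
    f = 0 ∨ ∃ m'' : ModMon n d, ord.lmo f = ↑m'' ∧ ord.toOrd.lt m'' m := by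
  rcases ord.lmo_cases f with ⟨h0, _⟩ | ⟨m'', hm⟩
  · exact Or.inl h0
  · exact Or.inr ⟨m'', hm, h m'' (ord.mem_suppF_of_lmo hm)⟩

lemma lmVec_eq {m : ModMon n d} {f : FreeMod k n d} (h : ord.lmo f = ↑m) :
    ord.lmVec f = mmVec m := by
  rw [ModMonOrder.lmVec, h]; rfl

lemma lmVec_eq_zero {f : FreeMod k n d} (h : ord.lmo f = ⊥) :
    ord.lmVec (k := k) f = 0 := by
  rw [ModMonOrder.lmVec, h]; rfl

end ModMonOrder

end Aux
noncomputable section Aux2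

open MvPolynomial

variable {k : Type*} [Field k] {n d : ℕ}

lemma mcoeff_mmVec (m m' : ModMon n d) :
    mcoeff m' (mmVec m : FreeMod k n d) = if m' = m then 1 else 0 := by
  obtain ⟨a, i⟩ := m; obtain ⟨a', i'⟩ := m'
  simp only [mcoeff, mmVec, Pi.single_apply, Prod.mk.injEq]
  by_cases hi : i' = i
  · subst hi
    simp [MvPolynomial.coeff_monomial, eq_comm]
  · simp only [if_neg hi, MvPolynomial.coeff_zero]
    rw [if_neg]
    rintro ⟨-, rfl⟩; exact hi rfl

lemma mem_suppF_add {m : ModMon n d} {x y : FreeMod k n d} (h : m ∈ suppF (x + y)) :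
    m ∈ suppF x ∨ m ∈ suppF y := by
  rw [mem_suppF_iff] at h ⊢
  rw [mem_suppF_iff (f := y)]
  by_contra hc
  push_neg at hc
  rw [mcoeff_add, hc.1, hc.2, add_zero] at h
  exact h rfl

lemma smul_mmVec (a : Fin n →₀ ℕ) (m : ModMon n d) :
    (MvPolynomial.monomial a (1 : k)) • (mmVec m : FreeMod k n d)
      = mmVec ((a + m.1, m.2) : ModMon n d) := by
  funext j
  simp only [mmVec, Pi.smul_apply, smul_eq_mul]
  by_cases hj : j = m.2
  · subst hj
    simp [Pi.single_apply, MvPolynomial.monomial_mul]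
  · simp [Pi.single_apply, hj]

namespace ModMonOrder

variable (ord : ModMonOrder n d)

lemma lmo_eq_of {m : ModMon n d} {f : FreeMod k n d} (h1 : m ∈ suppF f)
    (h2 : ∀ m' ∈ suppF f, ord.toOrd.le m' m) : ord.lmo f = ↑m := by
  rcases ord.lmo_cases f with ⟨h0, _⟩ | ⟨m'', hm⟩
  · subst h0; rw [suppF_eq_empty_iff.2 rfl] at h1; exact absurd h1 (Finset.notMem_empty m)
  · rw [hm]
    congr 1
    exact ord.toOrd.le_antisymm _ _ (h2 m'' (ord.mem_suppF_of_lmo hm)) (ord.le_of_mem_of_lmo hm h1)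

lemma le_of_mem_of_leB {m m' : ModMon n d} {x : FreeMod k n d}
    (h : ord.leB (ord.lmo x) ↑m) (h' : m' ∈ suppF x) : ord.toOrd.le m' m := by
  rcases ord.lmo_cases x with ⟨h0, _⟩ | ⟨mx, hmx⟩
  · subst h0; rw [suppF_eq_empty_iff.2 rfl] at h'; exact absurd h' (Finset.notMem_empty m')
  · have h1 := ord.le_of_mem_of_lmo hmx h'
    rw [hmx] at h
    exact ord.toOrd.le_trans _ _ _ h1 h

lemma lmo_add_le {x y : FreeMod k n d} {m : ModMon n d}
    (hx : ord.leB (ord.lmo x) ↑m) (hy : ord.leB (ord.lmo y) ↑m) :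
    ord.leB (ord.lmo (x + y)) ↑m := by
  apply ord.lmo_le
  intro m' hm'
  rcases mem_suppF_add hm' with h | h
  · exact ord.le_of_mem_of_leB hx h
  · exact ord.le_of_mem_of_leB hy h

/-- Leading monomial of `q • s`. -/
lemma lmo_smul {q : MvPolynomial (Fin n) k} {s : FreeMod k n d} {ms : ModMon n d}
    (hq : q ≠ 0) (hs : ord.lmo s = ↑ms) :
    ∃ a ∈ q.support,
      ord.lmo (q • s) = ↑((a + ms.1, ms.2) : ModMon n d) ∧
      mcoeff (a + ms.1, ms.2) (q • s) = q.coeff a * mcoeff ms s ∧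
      ∀ a' ∈ q.support, ord.toOrd.le ((a' + ms.1, ms.2) : ModMon n d) ((a + ms.1, ms.2) : ModMon n d) := by
  classical
  have hsupp : q.support.Nonempty := MvPolynomial.support_nonempty.2 hq
  have hTne : (q.support.image (fun a => ((a + ms.1, ms.2) : ModMon n d))).Nonempty :=
    hsupp.image _
  obtain ⟨a, ha, haM⟩ :=
    Finset.mem_image.1 (@Finset.max'_mem _ ord.toOrd _ hTne)
  have hbound : ∀ a' ∈ q.support,
      ord.toOrd.le ((a' + ms.1, ms.2) : ModMon n d) ((a + ms.1, ms.2) : ModMon n d) := by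
    intro a' ha'
    rw [haM]
    exact @Finset.le_max' _ ord.toOrd
      (q.support.image (fun a => ((a + ms.1, ms.2) : ModMon n d))) _
      (Finset.mem_image.2 ⟨a', ha', rfl⟩)
  have hms_mem : ms ∈ suppF s := ord.mem_suppF_of_lmo hs
  have hms_ne : mcoeff ms s ≠ 0 := mem_suppF_iff.1 hms_mem
  have hcoeff : mcoeff (a + ms.1, ms.2) (q • s) = q.coeff a * mcoeff ms s := by
    rw [mcoeff_smul, MvPolynomial.coeff_mul]
    refine Finset.sum_eq_single ((a, ms.1) : (Fin n →₀ ℕ) × (Fin n →₀ ℕ)) ?_ ?_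
    · rintro ⟨x1, x2⟩ hmem hne
      by_contra hne0
      have hx1 : x1 ∈ q.support := MvPolynomial.mem_support_iff.2 (left_ne_zero_of_mul hne0)
      have hx2 : ((x2, ms.2) : ModMon n d) ∈ suppF s :=
        mem_suppF_iff.2 (right_ne_zero_of_mul hne0)
      have hsum : x1 + x2 = a + ms.1 := Finset.HasAntidiagonal.mem_antidiagonal.1 hmem
      have h2 : ord.toOrd.le ((x2, ms.2) : ModMon n d) ms := ord.le_of_mem_of_lmo hs hx2
      have h3 := ord.add_le x1 x2 ms.1 ms.2 ms.2 (by exact h2)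
      rw [hsum] at h3
      have h4 := hbound x1 hx1
      have h5 : ((x1 + ms.1, ms.2) : ModMon n d) = (a + ms.1, ms.2) :=
        ord.toOrd.le_antisymm _ _ h4 h3
      have hx1a : x1 = a := by
        have := congrArg Prod.fst h5
        simpa using add_right_cancel this
      have hx2m : x2 = ms.1 := by
        subst hx1a
        exact add_left_cancel hsum
      exact hne (by rw [hx1a, hx2m])
    · intro hnotmem
      exact absurd (Finset.HasAntidiagonal.mem_antidiagonal (a := ((a, ms.1))) (n := a + ms.1) |>.2 rfl) hnotmem

  have hmem : ((a + ms.1, ms.2) : ModMon n d) ∈ suppF (q • s) := by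
    rw [mem_suppF_iff, hcoeff]
    exact mul_ne_zero (MvPolynomial.mem_support_iff.1 ha) hms_ne
  have hub : ∀ m' ∈ suppF (q • s), ord.toOrd.le m' ((a + ms.1, ms.2) : ModMon n d) := by
    rintro ⟨b, j⟩ hm'
    rw [mem_suppF_iff, mcoeff_smul, MvPolynomial.coeff_mul] at hm'
    obtain ⟨⟨x1, x2⟩, hxmem, hxne⟩ := Finset.exists_ne_zero_of_sum_ne_zero hm'
    have hx1 : x1 ∈ q.support := MvPolynomial.mem_support_iff.2 (left_ne_zero_of_mul hxne)
    have hx2 : ((x2, j) : ModMon n d) ∈ suppF s := mem_suppF_iff.2 (right_ne_zero_of_mul hxne)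
    have hsum : x1 + x2 = b := Finset.HasAntidiagonal.mem_antidiagonal.1 hxmem
    have h2 : ord.toOrd.le ((x2, j) : ModMon n d) ms := ord.le_of_mem_of_lmo hs hx2
    have h3 := ord.add_le x1 x2 ms.1 j ms.2 (by exact h2)
    rw [hsum] at h3
    have h4 := hbound x1 hx1
    exact ord.toOrd.le_trans _ _ _ h3 h4
  exact ⟨a, ha, ord.lmo_eq_of hmem hub, hcoeff, hbound⟩

/-- extraction of a divisor from membership in a span of leading-monomial vectors -/
lemma exists_divisor {T : Finset (FreeMod k n d)} {m : ModMon n d}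
    (hm : (mmVec m : FreeMod k n d) ∈
      Submodule.span (MvPolynomial (Fin n) k) (ord.lmVec '' (T : Set (FreeMod k n d)))) :
    ∃ s ∈ T, ∃ ms : ModMon n d, ord.lmo s = ↑ms ∧
      ∃ β : Fin n →₀ ℕ, m = ((β + ms.1, ms.2) : ModMon n d) := by
  classical
  rw [show ord.lmVec '' (T : Set (FreeMod k n d)) = ↑(T.image ord.lmVec) by
    rw [Finset.coe_image], Submodule.mem_span_finset] at hm
  obtain ⟨c, -, hc⟩ := hm
  have hne : mcoeff m (∑ v ∈ T.image ord.lmVec, c v • v) ≠ 0 := by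
    rw [hc, mcoeff_mmVec, if_pos rfl]; exact one_ne_zero
  rw [mcoeff_sum] at hne
  obtain ⟨v, hv, hvne⟩ := Finset.exists_ne_zero_of_sum_ne_zero hne
  obtain ⟨s, hsT, rfl⟩ := Finset.mem_image.1 hv
  rcases ord.lmo_cases s with ⟨_, h0⟩ | ⟨ms, hms⟩
  · rw [ord.lmVec_eq_zero h0, smul_zero] at hvne
    exact absurd (by simp [mcoeff]) hvne
  · refine ⟨s, hsT, ms, hms, ?_⟩
    rw [ord.lmVec_eq hms, mcoeff_smul] at hvne
    by_cases hj : m.2 = ms.2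
    · rw [show (mmVec ms : FreeMod k n d) m.2 = MvPolynomial.monomial ms.1 1 by
        rw [mmVec, hj, Pi.single_eq_same]] at hvne
      rw [MvPolynomial.coeff_mul_monomial'] at hvne
      by_cases hle : ms.1 ≤ m.1
      · refine ⟨m.1 - ms.1, ?_⟩
        have : m.1 - ms.1 + ms.1 = m.1 := tsub_add_cancel_of_le hle
        exact Prod.ext (by rw [this]) hj
      · rw [if_neg hle] at hvne; exact absurd rfl hvne
    · rw [show (mmVec ms : FreeMod k n d) m.2 = 0 by
        rw [mmVec, Pi.single_apply, if_neg hj]] at hvne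
      rw [mul_zero] at hvne
      exact absurd (MvPolynomial.coeff_zero _) hvne

end ModMonOrder

end Aux2
noncomputable section Aux3

open MvPolynomial

variable {k : Type*} [Field k] {n d : ℕ}

/-- relative standard representation -/
def RelRep (ord : ModMonOrder n d) (U : Submodule (MvPolynomial (Fin n) k) (FreeMod k n d))
    (H : Finset (FreeMod k n d)) (f : FreeMod k n d) : Prop :=
  ∃ g ∈ U, ∃ q : FreeMod k n d → MvPolynomial (Fin n) k,
    f = g + ∑ h ∈ H, q h • h ∧
    ∀ h ∈ H, q h ≠ 0 → ord.leB (ord.lmo (q h • h)) (ord.lmo f)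

namespace ModMonOrder

variable (ord : ModMonOrder n d)

lemma ole_of_lt {a b : ModMon n d} (h : ord.toOrd.lt a b) : ord.toOrd.le a b :=
  ((ord.toOrd.lt_iff_le_not_ge a b).1 h).1

lemma olt_of_le_ne {a b : ModMon n d} (h : ord.toOrd.le a b) (hne : a ≠ b) :
    ord.toOrd.lt a b :=
  (ord.toOrd.lt_iff_le_not_ge a b).2 ⟨h, fun hc => hne (ord.toOrd.le_antisymm _ _ h hc)⟩

lemma lmo_zero : ord.lmo (0 : FreeMod k n d) = ⊥ := ord.lmo_eq_bot_iff.2 rfl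

lemma relRep_zero (U : Submodule (MvPolynomial (Fin n) k) (FreeMod k n d))
    (H : Finset (FreeMod k n d)) : RelRep ord U H 0 :=
  ⟨0, U.zero_mem, fun _ => 0, by simp, fun h _ hq => absurd rfl hq⟩

theorem div_rep {U V : Submodule (MvPolynomial (Fin n) k) (FreeMod k n d)}
    (hUV : U ≤ V) {G H : Finset (FreeMod k n d)}
    (hGU : ∀ s ∈ G, s ∈ U) (hHV : ∀ h ∈ H, h ∈ V)
    (hspan : ord.lmSub V ≤
      Submodule.span (MvPolynomial (Fin n) k)
        (ord.lmVec '' ((H ∪ G : Finset (FreeMod k n d)) : Set (FreeMod k n d)))) :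
    ∀ f ∈ V, RelRep ord U H f := by
  classical
  have main : ∀ m : ModMon n d, ∀ f, f ∈ V → ord.lmo f = ↑m → RelRep ord U H f := by
    intro m0
    refine ord.wf.induction
      (C := fun m => ∀ f, f ∈ V → ord.lmo f = ↑m → RelRep ord U H f) m0 ?_
    intro m IH f hf hlmo
    have hf0 : f ≠ 0 := by
      intro h; rw [h, ord.lmo_zero] at hlmo; exact absurd hlmo (by simp)
    have h1 : (mmVec m : FreeMod k n d) ∈ ord.lmSub V := by
      rw [← ord.lmVec_eq hlmo]
      exact Submodule.subset_span ⟨f, hf, hf0, rfl⟩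
    obtain ⟨s, hsT, ms, hms, β, hmeq⟩ := ord.exists_divisor (hspan h1)
    have hsV : s ∈ V := by
      rcases Finset.mem_union.1 hsT with h | h
      · exact hHV _ h
      · exact hUV (hGU _ h)
    have hcs : mcoeff ms s ≠ 0 := mem_suppF_iff.1 (ord.mem_suppF_of_lmo hms)
    have hcf : mcoeff m f ≠ 0 := mem_suppF_iff.1 (ord.mem_suppF_of_lmo hlmo)
    have hc : mcoeff m f / mcoeff ms s ≠ 0 := div_ne_zero hcf hcs
    have hqne : (MvPolynomial.monomial β (mcoeff m f / mcoeff ms s) :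
        MvPolynomial (Fin n) k) ≠ 0 := by
      rw [Ne, MvPolynomial.monomial_eq_zero]; exact hc
    obtain ⟨a, ha, hlmt, hct, _⟩ := ord.lmo_smul hqne hms
    have haβ : a = β := by
      rw [MvPolynomial.support_monomial, if_neg hc] at ha
      exact Finset.mem_singleton.1 ha
    subst haβ
    set t : FreeMod k n d :=
      (MvPolynomial.monomial a (mcoeff m f / mcoeff ms s)) • s with ht
    have hlmt' : ord.lmo t = ↑m := by rw [hlmt, hmeq]
    have hct' : mcoeff m t = mcoeff m f := by
      rw [hmeq] at hct ⊢
      rw [hct, MvPolynomial.coeff_monomial, if_pos rfl, div_mul_cancel₀ _ hcs]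
    have htV : t ∈ V := Submodule.smul_mem _ _ hsV
    have hfV' : f - t ∈ V := Submodule.sub_mem _ hf htV
    have hsupp' : ∀ m' ∈ suppF (f - t), ord.toOrd.lt m' m := by
      intro m' hm'
      have hmc := mem_suppF_iff.1 hm'
      rw [mcoeff_sub] at hmc
      have hne : m' ≠ m := by
        rintro rfl; rw [hct', sub_self] at hmc; exact hmc rfl
      have hle : ord.toOrd.le m' m := by
        by_cases hmf : mcoeff m' f = 0
        · have : m' ∈ suppF t := mem_suppF_iff.2 (by
            intro h0; rw [hmf, h0, sub_zero] at hmc; exact hmc rfl)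
          exact ord.le_of_mem_of_lmo hlmt' this
        · exact ord.le_of_mem_of_lmo hlmo (mem_suppF_iff.2 hmf)
      exact ord.olt_of_le_ne hle hne
    have hrep' : RelRep ord U H (f - t) ∧ ord.leB (ord.lmo (f - t)) ↑m := by
      rcases ord.lmo_lt_cases hsupp' with hzero | ⟨m'', hm'', hlt⟩
      · rw [hzero]
        exact ⟨ord.relRep_zero U H, by rw [ord.lmo_zero]; trivial⟩
      · exact ⟨IH m'' hlt _ hfV' hm'', by rw [hm'']; exact ord.ole_of_lt hlt⟩
    obtain ⟨⟨g', hg', q', heq', hb'⟩, hlef'⟩ := hrep'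
    -- bounds valid for all h
    have hball : ∀ h ∈ H, ord.leB (ord.lmo (q' h • h)) ↑m := by
      intro h hH
      by_cases hq0 : q' h = 0
      · rw [hq0, zero_smul, ord.lmo_zero]; trivial
      · exact ord.leB_trans (hb' h hH hq0) hlef'
    rcases Finset.mem_union.1 hsT with hsH | hsG
    · -- divisor is in H
      refine ⟨g', hg',
        fun h => q' h + if h = s then MvPolynomial.monomial a (mcoeff m f / mcoeff ms s)
          else 0, ?_, ?_⟩
      · have hsum : ∑ h ∈ H, ((q' h + if h = s then
            MvPolynomial.monomial a (mcoeff m f / mcoeff ms s) else 0) • h)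
            = (∑ h ∈ H, q' h • h) + t := by
          simp_rw [add_smul, ite_smul, zero_smul]
          rw [Finset.sum_add_distrib, Finset.sum_ite_eq' H s, if_pos hsH, ht]
        rw [hsum, ← add_assoc, ← heq', sub_add_cancel]
      · intro h hH hqne'
        rw [hlmo]
        beta_reduce
        beta_reduce at hqne'
        by_cases hh : h = s
        · subst hh
          rw [if_pos rfl, add_smul]
          exact ord.lmo_add_le (hball h hH) (by rw [← ht, hlmt']; exact ord.leB_refl _)
        · rw [if_neg hh, add_zero]
          exact hball h hH
    · -- divisor is in G
      refine ⟨g' + t, U.add_mem hg' (Submodule.smul_mem _ _ (hGU s hsG)), q', ?_, ?_⟩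
      · rw [add_right_comm, ← heq', sub_add_cancel]
      · intro h hH hqne'
        rw [hlmo]
        exact hball h hH
  intro f hf
  rcases ord.lmo_cases f with ⟨h0, _⟩ | ⟨m, hm⟩
  · rw [h0]; exact ord.relRep_zero U H
  · exact main m f hf hm

end ModMonOrder

end Aux3
noncomputable section Aux4

open MvPolynomial

variable {k : Type*} [Field k] {n d : ℕ}

namespace ModMonOrder

variable (ord : ModMonOrder n d)

lemma lmSub_mono {U V : Submodule (MvPolynomial (Fin n) k) (FreeMod k n d)} (h : U ≤ V) :
    ord.lmSub U ≤ ord.lmSub V :=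
  Submodule.span_mono (by rintro v ⟨f, hf, hne, rfl⟩; exact ⟨f, h hf, hne, rfl⟩)

lemma lmVec_mem_lmSub {W : Submodule (MvPolynomial (Fin n) k) (FreeMod k n d)}
    {f : FreeMod k n d} (hf : f ∈ W) (hne : f ≠ 0) : ord.lmVec f ∈ ord.lmSub W :=
  Submodule.subset_span ⟨f, hf, hne, rfl⟩

/-- standard representations imply the relative Gröbner basis property -/
theorem rep_to_relGB {U V : Submodule (MvPolynomial (Fin n) k) (FreeMod k n d)}
    (hUV : U ≤ V) {H : Finset (FreeMod k n d)}
    (hHVU : (H : Set (FreeMod k n d)) ⊆ (V : Set (FreeMod k n d)) \ (U : Set (FreeMod k n d)))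
    (hrep : ∀ f ∈ V, RelRep ord U H f) :
    Submodule.span (MvPolynomial (Fin n) k) (ord.lmVec '' (H : Set (FreeMod k n d)))
      ⊔ ord.lmSub U = ord.lmSub V := by
  classical
  apply le_antisymm
  · apply sup_le
    · rw [Submodule.span_le]
      rintro v ⟨h, hh, rfl⟩
      have hh0 : h ≠ 0 := fun h0 => (hHVU hh).2 (by rw [h0]; exact SetLike.mem_coe.2 U.zero_mem)
      exact ord.lmVec_mem_lmSub (hHVU hh).1 hh0
    · exact ord.lmSub_mono hUV
  · rw [ModMonOrder.lmSub, Submodule.span_le]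
    rintro v ⟨f, hfV, hf0, rfl⟩
    obtain ⟨m, hm⟩ := ord.lmo_eq_coe hf0
    rw [ord.lmVec_eq hm]
    obtain ⟨g, hg, q, heq, hb⟩ := hrep f hfV
    have hcf : mcoeff m f ≠ 0 := mem_suppF_iff.1 (ord.mem_suppF_of_lmo hm)
    have hcoeqn : mcoeff m f = mcoeff m g + ∑ h ∈ H, mcoeff m (q h • h) := by
      rw [heq, mcoeff_add, mcoeff_sum]
    by_cases hgc : ∃ h ∈ H, mcoeff m (q h • h) ≠ 0
    · obtain ⟨h, hH, hch⟩ := hgc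
      have hq0 : q h ≠ 0 := by
        intro h0; rw [h0, zero_smul] at hch; exact hch (by simp [mcoeff])
      have hh0 : h ≠ 0 := fun h0 =>
        (hHVU (Finset.mem_coe.2 hH)).2 (by rw [h0]; exact SetLike.mem_coe.2 U.zero_mem)
      obtain ⟨mh, hmh⟩ := ord.lmo_eq_coe hh0
      have hmem : m ∈ suppF (q h • h) := mem_suppF_iff.2 hch
      have hle : ord.leB (ord.lmo (q h • h)) ↑m := by rw [← hm]; exact hb h hH hq0
      have hlmqh : ord.lmo (q h • h) = ↑m :=
        ord.lmo_eq_of hmem (fun m' hm' => ord.le_of_mem_of_leB hle hm')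
      obtain ⟨a, _, hlm2, _, _⟩ := ord.lmo_smul hq0 hmh
      rw [hlmqh] at hlm2
      have hmeq : m = ((a + mh.1, mh.2) : ModMon n d) := WithBot.coe_inj.1 hlm2
      rw [hmeq, ← smul_mmVec, ← ord.lmVec_eq hmh]
      exact Submodule.mem_sup_left
        (Submodule.smul_mem _ _ (Submodule.subset_span ⟨h, Finset.mem_coe.2 hH, rfl⟩))
    · push_neg at hgc
      have hsum0 : ∑ h ∈ H, mcoeff m (q h • h) = 0 :=
        Finset.sum_eq_zero fun h hH => hgc h hH
      have hcg : mcoeff m g = mcoeff m f := by rw [hcoeqn, hsum0, add_zero]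
      have hg0 : g ≠ 0 := by
        intro h0; rw [h0] at hcg; exact hcf (by rw [← hcg]; simp [mcoeff])
      have hgeq : g = f - ∑ h ∈ H, q h • h := by rw [heq]; abel
      have hlmg : ord.lmo g = ↑m := by
        apply ord.lmo_eq_of (mem_suppF_iff.2 (by rw [hcg]; exact hcf))
        intro m' hm'
        have hcm' := mem_suppF_iff.1 hm'
        rw [hgeq, mcoeff_sub, mcoeff_sum] at hcm'
        by_cases hmf : mcoeff m' f = 0
        · have : ∃ h ∈ H, mcoeff m' (q h • h) ≠ 0 := by
            by_contra hc; push_neg at hc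
            rw [hmf, Finset.sum_eq_zero hc, sub_zero] at hcm'
            exact hcm' rfl
          obtain ⟨h, hH, hch⟩ := this
          have hq0 : q h ≠ 0 := by
            intro h0; rw [h0, zero_smul] at hch; exact hch (by simp [mcoeff])
          have hle : ord.leB (ord.lmo (q h • h)) ↑m := by rw [← hm]; exact hb h hH hq0
          exact ord.le_of_mem_of_leB hle (mem_suppF_iff.2 hch)
        · exact ord.le_of_mem_of_lmo hm (mem_suppF_iff.2 hmf)
      rw [← ord.lmVec_eq hlmg]
      exact Submodule.mem_sup_right (ord.lmVec_mem_lmSub hg hg0)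

end ModMonOrder

end Aux4

/-- Characterizations of relative Gröbner bases: let `G` be a Gröbner basis of `U` and
`H ⊆ V ∖ U` a finite set whose elements are supported on module monomials outside `lm(U)`.
Then `H` is a Gröbner basis of `V` relative to `U` iff `H ∪ G` is a Gröbner basis of `V`,
iff every `f ∈ V` has a relative standard representation `f = g + Σ q_h h`. -/
theorem relative_groebner_basis_tfae {k : Type*} [Field k] {n d : ℕ}
    (ord : ModMonOrder n d)
    (U V : Submodule (MvPolynomial (Fin n) k) (FreeMod k n d))
    (hUV : U ≤ V)
    (G : Finset (FreeMod k n d)) (hG : IsGB ord U G)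
    (H : Finset (FreeMod k n d))
    (hHVU : (H : Set (FreeMod k n d)) ⊆ (V : Set (FreeMod k n d)) \ (U : Set (FreeMod k n d)))
    (hHsupp : ∀ h ∈ H, ∀ m ∈ suppF h, mmVec m ∉ ord.lmSub U) :
    (IsRelGB ord U V H ↔ IsGB ord V (H ∪ G)) ∧
    (IsRelGB ord U V H ↔
      ∀ f ∈ V, ∃ g ∈ U, ∃ q : FreeMod k n d → MvPolynomial (Fin n) k,
        f = g + ∑ h ∈ H, q h • h ∧
        ∀ h ∈ H, q h ≠ 0 → ord.leB (ord.lmo (q h • h)) (ord.lmo f)) := by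
  classical
  have hGsubU : ∀ s ∈ G, s ∈ U := fun s hs => by
    rw [← hG.1]; exact Submodule.subset_span (Finset.mem_coe.2 hs)
  have hHV : ∀ h ∈ H, h ∈ V := fun h hh => (hHVU (Finset.mem_coe.2 hh)).1
  have fact1 : Submodule.span (MvPolynomial (Fin n) k)
      (ord.lmVec '' ((H ∪ G : Finset (FreeMod k n d)) : Set (FreeMod k n d)))
      = Submodule.span (MvPolynomial (Fin n) k) (ord.lmVec '' (H : Set (FreeMod k n d)))
        ⊔ ord.lmSub U := by
    rw [Finset.coe_union, Set.image_union, Submodule.span_union, hG.2]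
  have hAC : IsRelGB ord U V H → ∀ f ∈ V, RelRep ord U H f := fun hA =>
    ord.div_rep hUV hGsubU hHV (by rw [fact1, hA.2.2])
  have hCA : (∀ f ∈ V, RelRep ord U H f) → IsRelGB ord U V H := fun hC =>
    ⟨hHVU, hHsupp, ord.rep_to_relGB hUV hHVU hC⟩
  constructor
  · constructor
    · intro hA
      constructor
      · apply le_antisymm
        · rw [Submodule.span_le]
          intro x hx
          rcases Finset.mem_union.1 (Finset.mem_coe.1 hx) with h | h
          · exact SetLike.mem_coe.2 (hHV x h)
          · exact SetLike.mem_coe.2 (hUV (hGsubU x h))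
        · intro f hf
          obtain ⟨g, hg, q, heq, -⟩ := hAC hA f hf
          rw [heq]
          refine Submodule.add_mem _ ?_ ?_
          · have hUle : U ≤ Submodule.span (MvPolynomial (Fin n) k)
                ((H ∪ G : Finset (FreeMod k n d)) : Set (FreeMod k n d)) := by
              rw [← hG.1]
              exact Submodule.span_mono (by rw [Finset.coe_union]; exact Set.subset_union_right)
            exact hUle hg
          · refine Submodule.sum_mem _ fun h hh => Submodule.smul_mem _ _ ?_
            exact Submodule.subset_span
              (Finset.mem_coe.2 (Finset.mem_union.2 (Or.inl hh)))
      · rw [fact1]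
        exact hA.2.2
    · intro hB
      exact ⟨hHVU, hHsupp, by rw [← fact1]; exact hB.2⟩
  · exact ⟨fun hA => hAC hA, fun hC => hCA hC⟩
end

section
/- Let U ⊆ V ⊆ R^d be submodules and ≺ a monomial order on R^d. Let G be a Gröbner basis of U and let H_V be a Gröbner basis of V such that G ⊆ H_V and every element of H_V ∖ U is supported on module monomials outside lm(U) (i.e., equals its normal form with respect to U). Then H := H_V ∖ U is a Gröbner basis of V relative to U. -/
attribute [local instance] Classical.propDecidable

/-- If `G` is a Gröbner basis of `U`, `H_V ⊇ G` is a Gröbner basis of `V` and every element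
of `H_V ∖ U` is supported on module monomials outside `lm(U)`, then `H := H_V ∖ U` is a
Gröbner basis of `V` relative to `U`. -/
theorem relative_groebner_basis_from_buchberger {k : Type*} [Field k] {n d : ℕ}
    (ord : ModMonOrder n d)
    (U V : Submodule (MvPolynomial (Fin n) k) (FreeMod k n d))
    (hUV : U ≤ V)
    (G HV : Finset (FreeMod k n d))
    (hG : IsGB ord U G)
    (hHV : IsGB ord V HV)
    (hGsub : G ⊆ HV)
    (hsupp : ∀ f ∈ HV, f ∉ U → ∀ m ∈ suppF f, mmVec m ∉ ord.lmSub U) :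
    IsRelGB ord U V (HV.filter fun f => f ∉ U) := by
  refine ⟨?_, ?_, ?_⟩
  · intro f hf
    simp only [Finset.coe_filter, Set.mem_setOf_eq] at hf
    exact ⟨by rw [← hHV.1]; exact Submodule.subset_span hf.1, hf.2⟩
  · intro h hh m hm
    rw [Finset.mem_filter] at hh
    exact hsupp h hh.1 hh.2 m hm
  · apply le_antisymm
    · apply sup_le
      · rw [← hHV.2]
        apply Submodule.span_mono
        apply Set.image_mono
        intro x hx
        exact Finset.filter_subset _ _ hx
      · apply Submodule.span_mono
        rintro v ⟨f, hfU, hf0, rfl⟩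
        exact ⟨f, hUV hfU, hf0, rfl⟩
    · rw [← hHV.2, Submodule.span_le]
      rintro v ⟨h, hhHV, rfl⟩
      by_cases hU : h ∈ U
      · by_cases h0 : h = 0
        · subst h0
          have hz : ord.lmVec (0 : FreeMod k n d) = 0 := by
            have : (Finset.univ.biUnion fun _ : Fin d => (∅ : Finset (ModMon n d))) = ∅ := by
              ext m; simp
            simp [ModMonOrder.lmVec, ModMonOrder.lmo, suppF, this]
          rw [hz]
          exact Submodule.zero_mem _
        · exact Submodule.mem_sup_right (Submodule.subset_span ⟨h, hU, h0, rfl⟩)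
      · exact Submodule.mem_sup_left (Submodule.subset_span
          ⟨h, by simpa [Finset.mem_filter, hU] using hhHV, rfl⟩)
end
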